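/- arXiv:1512.05560 — 5 statements merged into one kernel-verified Lean document; each statement's English description precedes it below -/
import Mathlib

section
/- Let Φ : 𝔻 → ℂ^{q×q} be a q×q Carathéodory function on the open unit disk 𝔻 and let μ be its Riesz–Herglotz measure, i.e., the unique positive semidefinite q×q matrix measure on the Borel sets of the unit circle 𝕋 with Φ(z) − i·Im Φ(0) = ∫_𝕋 (ζ+z)/(ζ−z) μ(dζ) for all z ∈ 𝔻. Then for each z ∈ 𝔻, the range of Re Φ(z) equals the range of μ(𝕋), and the null space of Re Φ(z) equals the null space of μ(𝕋). -/
open Matrix MeasureTheory Metric Filter Topology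
open scoped ComplexOrder

lemma symm_range_eq_orth' {q : ℕ} (T : EuclideanSpace ℂ (Fin q) →ₗ[ℂ] EuclideanSpace ℂ (Fin q))
    (hT : T.IsSymmetric) : LinearMap.range T = (LinearMap.ker T)ᗮ := by
  apply Submodule.eq_of_le_of_finrank_eq
  · rintro x ⟨y, rfl⟩
    intro v hv
    rw [← hT v y]
    simp [LinearMap.mem_ker.mp hv]
  · have h1 := LinearMap.finrank_range_add_finrank_ker T
    have h2 := Submodule.finrank_add_finrank_orthogonal (K := LinearMap.ker T)
    omega

lemma range_euclid' {q : ℕ} (A : Matrix (Fin q) (Fin q) ℂ) :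
    LinearMap.range A.mulVecLin =
      Submodule.map (WithLp.linearEquiv 2 ℂ (Fin q → ℂ) : _ →ₗ[ℂ] _)
        (LinearMap.range (Matrix.toEuclideanLin A)) := by
  ext x
  simp [LinearMap.mem_range, Matrix.toEuclideanLin_apply]
  constructor
  · rintro ⟨y, rfl⟩; exact ⟨(WithLp.equiv 2 _).symm y, rfl⟩
  · rintro ⟨y, rfl⟩; exact ⟨(WithLp.equiv 2 _) y, rfl⟩

lemma ker_euclid' {q : ℕ} (A : Matrix (Fin q) (Fin q) ℂ) :
    LinearMap.ker (Matrix.toEuclideanLin A) =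
      Submodule.comap (WithLp.linearEquiv 2 ℂ (Fin q → ℂ) : _ →ₗ[ℂ] _)
        (LinearMap.ker A.mulVecLin) := by
  ext x
  simp [LinearMap.mem_ker, Matrix.toEuclideanLin_apply]

lemma herm_range_eq' {q : ℕ} {A B : Matrix (Fin q) (Fin q) ℂ}
    (hA : A.IsHermitian) (hB : B.IsHermitian)
    (h : LinearMap.ker A.mulVecLin = LinearMap.ker B.mulVecLin) :
    LinearMap.range A.mulVecLin = LinearMap.range B.mulVecLin := by
  rw [range_euclid', range_euclid',
    symm_range_eq_orth' _ (Matrix.isHermitian_iff_isSymmetric.mp hA),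
    symm_range_eq_orth' _ (Matrix.isHermitian_iff_isSymmetric.mp hB),
    ker_euclid', ker_euclid', h]

lemma re_kernel' {z ζ : ℂ} (hζ : Complex.normSq ζ = 1) :
    ((ζ + z)/(ζ - z)).re = (1 - Complex.normSq z)/Complex.normSq (ζ - z) := by
  rw [Complex.div_re, ← add_div]
  congr 1
  simp only [Complex.add_re, Complex.add_im, Complex.sub_re, Complex.sub_im]
  simp only [Complex.normSq_apply] at hζ ⊢
  nlinarith [hζ]

lemma dot_integral' {q : ℕ} (v : Fin q → ℂ) (F : ℂ → Matrix (Fin q) (Fin q) ℂ)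
    (ν : MeasureTheory.Measure ℂ) (hF : ∀ a b, Integrable (fun ζ => F ζ a b) ν) :
    star v ⬝ᵥ (Matrix.of fun a b => ∫ ζ, F ζ a b ∂ν) *ᵥ v
      = ∫ ζ, star v ⬝ᵥ (F ζ) *ᵥ v ∂ν := by
  simp only [dotProduct, mulVec, Matrix.of_apply, Pi.star_apply]
  have : ∀ ζ, (∑ a, star (v a) * ∑ b, F ζ a b * v b)
      = ∑ a, ∑ b, star (v a) * (F ζ a b * v b) := by
    intro ζ; simp [Finset.mul_sum]
  simp only [this]
  rw [integral_finset_sum]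
  · apply Finset.sum_congr rfl
    intro a _
    rw [integral_finset_sum]
    · rw [Finset.mul_sum]
      apply Finset.sum_congr rfl
      intro b _
      rw [show star (v a) * ((∫ ζ, F ζ a b ∂ν) * v b)
            = (star (v a) * v b) * ∫ ζ, F ζ a b ∂ν by ring, ← integral_const_mul]
      apply integral_congr_ae; filter_upwards with ζ; ring
    · intro b _
      exact (((hF a b).mul_const (v b)).const_mul (star (v a)))
  · intro a _
    apply integrable_finset_sum
    intro b _
    exact (((hF a b).mul_const (v b)).const_mul (star (v a)))

/-- Let `Φ` be a `q×q` Carathéodory function on the unit disk with Riesz–Herglotz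
measure `μ` (encoded by a finite positive measure `ν` supported on the unit circle
and a `ν`-a.e. positive semidefinite integrable matrix density `g`). Then for each
`z` in the disk, the range of `Re Φ(z)` equals the range of `μ(𝕋)` and the null
space of `Re Φ(z)` equals the null space of `μ(𝕋)`. -/
theorem range_re_caratheodory_eq_range_total_mass (q : ℕ)
    (Φ : ℂ → Matrix (Fin q) (Fin q) ℂ)
    (hdiff : ∀ a b, DifferentiableOn ℂ (fun z => Φ z a b) (ball (0 : ℂ) 1))
    (hre : ∀ z ∈ ball (0 : ℂ) 1, ((1 / 2 : ℂ) • (Φ z + (Φ z)ᴴ)).PosSemidef)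
    (ν : Measure ℂ) [IsFiniteMeasure ν] (hν : ν ((sphere (0 : ℂ) 1)ᶜ) = 0)
    (g : ℂ → Matrix (Fin q) (Fin q) ℂ)
    (hg : ∀ a b, Integrable (fun z => g z a b) ν)
    (hpsd : ∀ᵐ z ∂ν, (g z).PosSemidef)
    (hRH : ∀ z ∈ ball (0 : ℂ) 1, ∀ a b,
      Φ z a b - (1 / 2 : ℂ) * (Φ 0 a b - (starRingEnd ℂ) (Φ 0 b a)) =
        ∫ ζ, ((ζ + z) / (ζ - z)) * g ζ a b ∂ν) :
    ∀ z ∈ ball (0 : ℂ) 1,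
      LinearMap.range ((1 / 2 : ℂ) • (Φ z + (Φ z)ᴴ)).mulVecLin =
          LinearMap.range (Matrix.of fun a b => ∫ ζ, g ζ a b ∂ν).mulVecLin ∧
        LinearMap.ker ((1 / 2 : ℂ) • (Φ z + (Φ z)ᴴ)).mulVecLin =
          LinearMap.ker (Matrix.of fun a b => ∫ ζ, g ζ a b ∂ν).mulVecLin := by
  intro z hz
  have hz' : ‖z‖ < 1 := mem_ball_zero_iff.mp hz
  set k : ℂ → ℂ := fun ζ => (ζ + z) / (ζ - z) with hk
  set u : (Fin q → ℂ) → ℂ → ℂ := fun v ζ => star v ⬝ᵥ (g ζ) *ᵥ v with hu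
  set A : Matrix (Fin q) (Fin q) ℂ := (1 / 2 : ℂ) • (Φ z + (Φ z)ᴴ) with hAdef
  set M : Matrix (Fin q) (Fin q) ℂ := Matrix.of fun a b => ∫ ζ, g ζ a b ∂ν with hMdef
  have hApsd : A.PosSemidef := hre z hz
  have hsph : ∀ᵐ ζ ∂ν, ζ ∈ sphere (0 : ℂ) 1 := by
    rw [ae_iff, show {a : ℂ | ¬a ∈ sphere (0 : ℂ) 1} = (sphere (0 : ℂ) 1)ᶜ from rfl]
    exact hν
  have hζz : ∀ ζ ∈ sphere (0 : ℂ) 1, ζ - z ≠ 0 := by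
    intro ζ hζ h
    rw [sub_eq_zero] at h
    rw [mem_sphere_zero_iff_norm] at hζ
    rw [h] at hζ
    exact absurd hζ (by linarith)
  have hbd : ∀ᵐ ζ ∂ν, ‖k ζ‖ ≤ 2 / (1 - ‖z‖) := by
    filter_upwards [hsph] with ζ hζ
    have h1 : ‖ζ‖ = 1 := mem_sphere_zero_iff_norm.mp hζ
    have h2 : (1 : ℝ) - ‖z‖ ≤ ‖ζ - z‖ := by
      have := norm_sub_norm_le ζ z; linarith
    have h3 : ‖ζ + z‖ ≤ 2 := by
      have := norm_add_le ζ z; linarith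
    simp only [hk, norm_div]
    exact div_le_div₀ (by norm_num) h3 (by linarith) h2
  have hkm : Measurable k := (measurable_id.add_const z).div (measurable_id.sub_const z)
  have hkmeas : AEStronglyMeasurable k ν := hkm.aestronglyMeasurable
  have hre_pos : ∀ᵐ ζ ∂ν, 0 < (k ζ).re := by
    filter_upwards [hsph] with ζ hζ
    have h1 : ‖ζ‖ = 1 := mem_sphere_zero_iff_norm.mp hζ
    have hnsq : Complex.normSq ζ = 1 := by
      have : Complex.normSq ζ = ‖ζ‖ ^ 2 := by rw [Complex.sq_norm]
      rw [this, h1]; norm_num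
    simp only [hk]
    rw [re_kernel' hnsq]
    apply div_pos
    · have h4 : Complex.normSq z = ‖z‖ ^ 2 := by rw [Complex.sq_norm]
      nlinarith [norm_nonneg z]
    · exact Complex.normSq_pos.mpr (hζz ζ hζ)
  have hrebd : ∀ᵐ ζ ∂ν, ‖((k ζ).re : ℂ)‖ ≤ 2 / (1 - ‖z‖) := by
    filter_upwards [hbd] with ζ h
    calc ‖((k ζ).re : ℂ)‖ = |(k ζ).re| := by rw [Complex.norm_real, Real.norm_eq_abs]
    _ ≤ ‖k ζ‖ := by exact Complex.abs_re_le_norm _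
    _ ≤ 2 / (1 - ‖z‖) := h
  have hrebdR : ∀ᵐ ζ ∂ν, ‖(k ζ).re‖ ≤ 2 / (1 - ‖z‖) := by
    filter_upwards [hbd] with ζ h
    calc ‖(k ζ).re‖ = |(k ζ).re| := Real.norm_eq_abs _
    _ ≤ ‖k ζ‖ := by exact Complex.abs_re_le_norm _
    _ ≤ 2 / (1 - ‖z‖) := h
  have hremeas : AEStronglyMeasurable (fun ζ => ((k ζ).re : ℂ)) ν :=
    (Complex.measurable_ofReal.comp (Complex.measurable_re.comp hkm)).aestronglyMeasurable
  have hint1 : ∀ a b, Integrable (fun ζ => k ζ * g ζ a b) ν :=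
    fun a b => (hg a b).bdd_mul hkmeas hbd
  have hint2 : ∀ a b, Integrable (fun ζ => (starRingEnd ℂ) (k ζ) * g ζ a b) ν := by
    intro a b
    refine (hg a b).bdd_mul (c := 2 / (1 - ‖z‖)) (Complex.continuous_conj.measurable.comp hkm).aestronglyMeasurable ?_
    filter_upwards [hbd] with ζ h
    simpa using h
  have hint3 : ∀ a b, Integrable (fun ζ => ((k ζ).re : ℂ) * g ζ a b) ν :=
    fun a b => (hg a b).bdd_mul hremeas hrebd
  have hgherm : ∀ᵐ ζ ∂ν, ∀ a b, (starRingEnd ℂ) (g ζ b a) = g ζ a b := by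
    filter_upwards [hpsd] with ζ h
    intro a b
    exact h.1.apply a b
  have hAentry : ∀ a b, A a b = ∫ ζ, ((k ζ).re : ℂ) * g ζ a b ∂ν := by
    intro a b
    have e1 := hRH z hz a b
    have e2 : (starRingEnd ℂ) (Φ z b a) - (1 / 2 : ℂ) * ((starRingEnd ℂ) (Φ 0 b a) - Φ 0 a b)
        = ∫ ζ, (starRingEnd ℂ) (k ζ) * g ζ a b ∂ν := by
      have h0 := congrArg (starRingEnd ℂ) (hRH z hz b a)
      simp only [map_sub, _root_.map_mul, map_div₀, _root_.map_one, map_ofNat,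
        Complex.conj_conj] at h0
      rw [← integral_conj] at h0
      have h1 : ∫ ζ, (starRingEnd ℂ) (k ζ * g ζ b a) ∂ν
          = ∫ ζ, (starRingEnd ℂ) (k ζ) * g ζ a b ∂ν := by
        apply integral_congr_ae
        filter_upwards [hgherm] with ζ h
        rw [_root_.map_mul, h a b]
      rw [h1] at h0
      exact h0
    have key : Φ z a b + (starRingEnd ℂ) (Φ z b a)
        = (∫ ζ, k ζ * g ζ a b ∂ν) + ∫ ζ, (starRingEnd ℂ) (k ζ) * g ζ a b ∂ν := by
      linear_combination e1 + e2
    have hAab : A a b = (1 / 2 : ℂ) * (Φ z a b + (starRingEnd ℂ) (Φ z b a)) := by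
      simp [hAdef, Matrix.add_apply, Matrix.smul_apply, Matrix.conjTranspose_apply, smul_eq_mul]
      ring
    rw [hAab, key, ← integral_add (hint1 a b) (hint2 a b), ← integral_const_mul]
    apply integral_congr_ae
    filter_upwards with ζ
    have h2 : k ζ + (starRingEnd ℂ) (k ζ) = 2 * ((k ζ).re : ℂ) := by
      rw [Complex.add_conj]; push_cast; ring
    linear_combination (g ζ a b / 2) * h2
  have hQA : ∀ v : Fin q → ℂ, star v ⬝ᵥ A *ᵥ v = ∫ ζ, ((k ζ).re : ℂ) * u v ζ ∂ν := by
    intro v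
    have hAeq : A = Matrix.of fun a b => ∫ ζ, (((k ζ).re : ℂ) • g ζ) a b ∂ν := by
      ext a b
      simp only [Matrix.of_apply, Matrix.smul_apply, smul_eq_mul]
      exact hAentry a b
    rw [hAeq, dot_integral' v _ ν (fun a b => by
      simpa [Matrix.smul_apply, smul_eq_mul] using hint3 a b)]
    apply integral_congr_ae
    filter_upwards with ζ
    simp only [hu, Matrix.smul_mulVec, dotProduct_smul, smul_eq_mul]
  have hQM : ∀ v, star v ⬝ᵥ M *ᵥ v = ∫ ζ, u v ζ ∂ν := fun v => dot_integral' v g ν hg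
  have hu_int : ∀ v, Integrable (u v) ν := by
    intro v
    simp only [hu, dotProduct, mulVec, Pi.star_apply]
    apply integrable_finset_sum
    intro a _
    exact (integrable_finset_sum _ (fun b _ => (hg a b).mul_const (v b))).const_mul _
  have hu_ae : ∀ v, ∀ᵐ ζ ∂ν, 0 ≤ (u v ζ).re ∧ u v ζ = ((u v ζ).re : ℂ) := by
    intro v
    filter_upwards [hpsd] with ζ h
    have h0 : 0 ≤ u v ζ := h.dotProduct_mulVec_nonneg v
    rw [Complex.nonneg_iff] at h0
    exact ⟨h0.1, Complex.ext (by simp) (by simp [← h0.2])⟩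
  have hQA' : ∀ v, star v ⬝ᵥ A *ᵥ v = ((∫ ζ, (k ζ).re * (u v ζ).re ∂ν : ℝ) : ℂ) := by
    intro v
    rw [hQA v]
    have h2 : ∫ ζ, (((k ζ).re * (u v ζ).re : ℝ) : ℂ) ∂ν
        = ((∫ ζ, (k ζ).re * (u v ζ).re ∂ν : ℝ) : ℂ) := integral_ofReal
    rw [← h2]
    apply integral_congr_ae
    filter_upwards [hu_ae v] with ζ h
    rw [Complex.ofReal_mul, ← h.2]
  have hQM' : ∀ v, star v ⬝ᵥ M *ᵥ v = ((∫ ζ, (u v ζ).re ∂ν : ℝ) : ℂ) := by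
    intro v
    rw [hQM v]
    have h2 : ∫ ζ, (((u v ζ).re : ℝ) : ℂ) ∂ν
        = ((∫ ζ, (u v ζ).re ∂ν : ℝ) : ℂ) := integral_ofReal
    rw [← h2]
    apply integral_congr_ae
    filter_upwards [hu_ae v] with ζ h
    exact h.2
  have hur_int : ∀ v, Integrable (fun ζ => (u v ζ).re) ν := by
    intro v
    have := (hu_int v).re
    simpa [RCLike.re_to_complex] using this
  have hkr_int : ∀ v, Integrable (fun ζ => (k ζ).re * (u v ζ).re) ν := fun v =>
    (hur_int v).bdd_mul (Complex.measurable_re.comp hkm).aestronglyMeasurable hrebdR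
  have hMherm : M.IsHermitian := by
    ext a b
    rw [Matrix.conjTranspose_apply]
    show star (∫ ζ, g ζ b a ∂ν) = ∫ ζ, g ζ a b ∂ν
    rw [RCLike.star_def, ← integral_conj]
    apply integral_congr_ae
    filter_upwards [hgherm] with ζ h
    exact h a b
  have hMpsd : M.PosSemidef := by
    refine PosSemidef.of_dotProduct_mulVec_nonneg hMherm (fun v => ?_)
    rw [hQM' v, Complex.zero_le_real]
    apply integral_nonneg_of_ae
    filter_upwards [hu_ae v] with ζ h using h.1
  have hker : LinearMap.ker A.mulVecLin = LinearMap.ker M.mulVecLin := by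
    ext v
    simp only [LinearMap.mem_ker, Matrix.mulVecLin_apply]
    rw [← hApsd.dotProduct_mulVec_zero_iff, ← hMpsd.dotProduct_mulVec_zero_iff, hQA' v, hQM' v,
      Complex.ofReal_eq_zero, Complex.ofReal_eq_zero]
    have pos1 : 0 ≤ᵐ[ν] fun ζ => (k ζ).re * (u v ζ).re := by
      filter_upwards [hre_pos, hu_ae v] with ζ h1 h2
      exact mul_nonneg h1.le h2.1
    have pos2 : 0 ≤ᵐ[ν] fun ζ => (u v ζ).re := by
      filter_upwards [hu_ae v] with ζ h
      exact h.1
    rw [integral_eq_zero_iff_of_nonneg_ae pos1 (hkr_int v),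
      integral_eq_zero_iff_of_nonneg_ae pos2 (hur_int v)]
    constructor
    · intro h
      filter_upwards [h, hre_pos] with ζ h1 h2
      simp only [Pi.zero_apply] at h1 ⊢
      exact (mul_eq_zero.mp h1).resolve_left (ne_of_gt h2)
    · intro h
      filter_upwards [h] with ζ h1
      simp only [Pi.zero_apply] at h1 ⊢
      rw [h1, mul_zero]
  exact ⟨herm_range_eq' hApsd.1 hMpsd.1 hker, hker⟩
end

section
/- Let D be a region of ℂ containing the closed disk of radius r > 1 about 0, and let F be a q×q matrix-valued function meromorphic in D whose restriction Φ to the open unit disk 𝔻 is a Carathéodory function with Riesz–Herglotz measure μ. If u ∈ 𝕋 is a pole of F, then u is a simple pole, the residue of F at u equals −2u·μ({u}), and lim_{r→1⁻} (ru − u) F(ru) = −2u·μ({u}). -/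
open Matrix MeasureTheory Metric Filter Topology
open scoped ComplexOrder

lemma radial_aux (ν : Measure ℂ) [IsFiniteMeasure ν] (hν : ν ((sphere (0 : ℂ) 1)ᶜ) = 0)
    (G : ℂ → ℂ) (hg : Integrable G ν) (u : ℂ) (hu1 : ‖u‖ = 1) (c : ℂ)
    (H : ℂ → ℂ)
    (hRH : ∀ z ∈ ball (0 : ℂ) 1, H z = c + ∫ ζ, ((ζ + z) / (ζ - z)) * G ζ ∂ν) :
    Tendsto (fun t : ℝ => ((t : ℂ) * u - u) * H ((t : ℂ) * u))
      (𝓝[<] (1:ℝ)) (𝓝 (-2 * u * ∫ ζ in {u}, G ζ ∂ν)) := by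
  have hu0 : u ≠ 0 := by intro h; simp [h] at hu1
  set φ : ℝ → ℂ → ℂ :=
    fun t ζ => (((t:ℂ)*u - u) * ((ζ + (t:ℂ)*u)/(ζ - (t:ℂ)*u))) * G ζ with hφ
  have hmemIoo : Set.Ioo (0:ℝ) 1 ∈ 𝓝[<] (1:ℝ) :=
    Ioo_mem_nhdsLT_of_mem (by constructor <;> norm_num)
  have key : ∀ t ∈ Set.Ioo (0:ℝ) 1,
      ((t:ℂ)*u - u) * H ((t:ℂ)*u) = ((t:ℂ)*u - u)*c + ∫ ζ, φ t ζ ∂ν := by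
    intro t ht
    have hmem : (t:ℂ)*u ∈ ball (0:ℂ) 1 := by
      simp only [mem_ball, dist_zero_right, norm_mul, Complex.norm_real, hu1, mul_one]
      rw [Real.norm_eq_abs, abs_of_pos ht.1]; exact ht.2
    rw [hRH _ hmem, mul_add, ← integral_const_mul]
    simp only [hφ, mul_assoc]
  have lim1 : Tendsto (fun t:ℝ => ((t:ℂ)*u - u)*c) (𝓝[<](1:ℝ)) (𝓝 0) := by
    have h : Tendsto (fun t:ℝ => ((t:ℂ)*u - u)*c) (𝓝 1) (𝓝 (((1:ℝ)*u - u)*c)) := by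
      exact (((Complex.continuous_ofReal.mul continuous_const).sub
        continuous_const).mul continuous_const).tendsto 1
    simpa using h.mono_left nhdsWithin_le_nhds
  have hae : ∀ᵐ ζ ∂ν, ζ ∈ sphere (0:ℂ) 1 := by
    rw [ae_iff]
    exact hν
  have lim2 : Tendsto (fun t:ℝ => ∫ ζ, φ t ζ ∂ν) (𝓝[<](1:ℝ))
      (𝓝 (∫ ζ, Set.indicator {u} (fun ζ => -2*u*G ζ) ζ ∂ν)) := by
    apply tendsto_integral_filter_of_dominated_convergence (fun ζ => 2 * ‖G ζ‖)
    · filter_upwards with t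
      apply AEStronglyMeasurable.mul _ hg.aestronglyMeasurable
      apply Measurable.aestronglyMeasurable
      exact measurable_const.mul ((measurable_id.add_const _).div (measurable_id.sub_const _))
    · filter_upwards [hmemIoo] with t ht
      filter_upwards [hae] with ζ hζ
      have hζ1 : ‖ζ‖ = 1 := by simpa using hζ
      have ht1 : (0:ℝ) < 1 - t := by linarith [ht.2]
      have hnum : ‖ζ + (t:ℂ)*u‖ ≤ 2 := by
        calc ‖ζ + (t:ℂ)*u‖ ≤ ‖ζ‖ + ‖(t:ℂ)*u‖ := norm_add_le _ _
        _ ≤ 1 + 1 := by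
            simp only [hζ1, norm_mul, Complex.norm_real, hu1, mul_one,
              Real.norm_eq_abs, abs_of_pos ht.1]
            linarith [ht.2]
        _ = 2 := by norm_num
      have hden : 1 - t ≤ ‖ζ - (t:ℂ)*u‖ := by
        calc (1:ℝ) - t = ‖ζ‖ - ‖(t:ℂ)*u‖ := by
              simp [hζ1, norm_mul, Complex.norm_real, hu1, Real.norm_eq_abs,
                abs_of_pos ht.1]
        _ ≤ ‖ζ - (t:ℂ)*u‖ := norm_sub_norm_le _ _
      have hfac : ‖((t:ℂ)*u - u)‖ = 1 - t := by
        have : ((t:ℂ)*u - u) = ((t:ℂ)-1)*u := by ring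
        rw [this, norm_mul, hu1, mul_one]
        rw [show ((t:ℂ)-1) = ((t - 1 : ℝ) : ℂ) by push_cast; ring]
        rw [Complex.norm_real, Real.norm_eq_abs, abs_of_neg (by linarith [ht.2] : t - 1 < 0)]; ring
      rw [hφ]
      simp only [norm_mul, norm_div]
      rw [hfac]
      have hq : ‖ζ + (t:ℂ)*u‖ / ‖ζ - (t:ℂ)*u‖ ≤ 2 / (1-t) :=
        div_le_div₀ (by norm_num) hnum ht1 hden
      calc (1-t) * (‖ζ + (t:ℂ)*u‖ / ‖ζ - (t:ℂ)*u‖) * ‖G ζ‖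
          ≤ (1-t) * (2/(1-t)) * ‖G ζ‖ := by
            apply mul_le_mul_of_nonneg_right _ (norm_nonneg _)
            exact mul_le_mul_of_nonneg_left hq (le_of_lt ht1)
        _ = 2 * ‖G ζ‖ := by field_simp
    · exact (hg.norm.const_mul 2)
    · apply Filter.Eventually.of_forall
      intro ζ
      by_cases hζu : ζ = u
      · subst hζu
        rw [Set.indicator_of_mem (Set.mem_singleton _)]
        have heq : ∀ᶠ t in 𝓝[<](1:ℝ), φ t ζ = (-(1+(t:ℂ)) * ζ) * G ζ := by
          filter_upwards [hmemIoo] with t ht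
          have hne : ζ - (t:ℂ)*ζ ≠ 0 := by
            intro h
            have : (1 - (t:ℂ)) * ζ = 0 := by rw [← h]; ring
            rcases mul_eq_zero.mp this with h1 | h2
            · have : (t:ℂ) = 1 := by linear_combination -h1
              have : t = 1 := by exact_mod_cast this
              linarith [ht.2]
            · exact hu0 h2
          rw [hφ]
          have h1t : (1:ℂ) - t ≠ 0 := by
            intro h; have : (t:ℂ) = 1 := by linear_combination -h
            have : t = 1 := by exact_mod_cast this
            linarith [ht.2]

          field_simp
          ring
        rw [tendsto_congr' heq]
        have h : Tendsto (fun t:ℝ => (-(1+(t:ℂ)) * ζ) * G ζ) (𝓝 1)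
            (𝓝 ((-(1+((1:ℝ):ℂ)) * ζ) * G ζ)) := by
          apply Tendsto.mul _ tendsto_const_nhds
          exact ((continuous_const.add Complex.continuous_ofReal).neg.mul
            continuous_const).tendsto 1
        have h2 := h.mono_left (nhdsWithin_le_nhds (s := Set.Iio (1:ℝ)))
        have h3 : (-(1+((1:ℝ):ℂ)) * ζ) * G ζ = -2 * ζ * G ζ := by push_cast; ring
        rw [h3] at h2
        exact h2
      · rw [Set.indicator_of_notMem (by simpa using hζu)]
        have hlim : Tendsto (fun t:ℝ => φ t ζ) (𝓝 1)
            (𝓝 (((((1:ℝ):ℂ)*u - u) * ((ζ + ((1:ℝ):ℂ)*u)/(ζ - ((1:ℝ):ℂ)*u))) * G ζ)) := by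
          apply Tendsto.mul _ tendsto_const_nhds
          apply Tendsto.mul
          · exact ((Complex.continuous_ofReal.mul continuous_const).sub
              continuous_const).tendsto 1
          · exact Tendsto.div
              ((continuous_const.add
                (Complex.continuous_ofReal.mul continuous_const)).tendsto 1)
              ((continuous_const.sub
                (Complex.continuous_ofReal.mul continuous_const)).tendsto 1)
              (by simpa using sub_ne_zero.mpr hζu)
        have h2 := hlim.mono_left (nhdsWithin_le_nhds (s := Set.Iio (1:ℝ)))
        simpa using h2
  have hind : ∫ ζ, Set.indicator {u} (fun ζ => -2*u*G ζ) ζ ∂ν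
      = -2*u*∫ ζ in {u}, G ζ ∂ν := by
    rw [integral_indicator (measurableSet_singleton u)]
    simp_rw [mul_assoc, integral_const_mul]
  have hsum := lim1.add lim2
  rw [zero_add, hind] at hsum
  apply Tendsto.congr' _ hsum
  filter_upwards [hmemIoo] with t ht
  exact (key t ht).symm

-- auxiliary: pole blowup
lemma pole_blowup (f : ℂ → ℂ) (u : ℂ) (h : MeromorphicAt f u)
    (hlt : meromorphicOrderAt f u < (-1 : ℤ)) :
    Tendsto (fun z => ‖(z - u) * f z‖) (𝓝[≠] u) atTop := by
  have hne : meromorphicOrderAt f u ≠ ⊤ := by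
    intro htop; rw [htop] at hlt; exact absurd hlt (by simp)
  obtain ⟨n, hn⟩ := WithTop.ne_top_iff_exists.mp hne
  have hn2 : n < -1 := by
    rw [← hn] at hlt; exact_mod_cast hlt
  obtain ⟨G, hG, hG0, hFeq⟩ := (meromorphicOrderAt_eq_int_iff (n := n) h).mp hn.symm
  set m : ℕ := (-(n+1)).toNat with hmdef
  have hm : (m : ℤ) = -(n+1) := Int.toNat_of_nonneg (by omega)
  have hm0 : m ≠ 0 := by omega
  have hev : ∀ᶠ z in 𝓝[≠] u, ‖(z - u) * f z‖ = ‖G z‖ * (‖z - u‖^m)⁻¹ := by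
    filter_upwards [hFeq, self_mem_nhdsWithin] with z hz hz'
    have hzu : z - u ≠ 0 := sub_ne_zero.mpr hz'
    rw [hz, smul_eq_mul,
      show (z-u) * ((z-u)^n * G z) = G z * ((z-u)^(n+1)) from by
        rw [zpow_add_one₀ hzu]; ring,
      norm_mul, norm_zpow,
      show n+1 = -(m:ℤ) from by omega, _root_.zpow_neg, zpow_natCast]
  rw [tendsto_congr' hev]
  apply Filter.Tendsto.pos_mul_atTop (norm_pos_iff.mpr hG0)
  · exact (hG.continuousAt.norm.tendsto).mono_left nhdsWithin_le_nhds
  · apply tendsto_inv_nhdsGT_zero.comp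
    rw [tendsto_nhdsWithin_iff]
    constructor
    · have : Tendsto (fun z => ‖z - u‖^m) (𝓝 u) (𝓝 (‖u - u‖^m)) :=
        ((continuous_id.sub continuous_const).norm.pow m).tendsto u
      simp only [sub_self, norm_zero, zero_pow hm0] at this
      exact this.mono_left nhdsWithin_le_nhds
    · filter_upwards [self_mem_nhdsWithin] with z hz
      exact pow_pos (norm_pos_iff.mpr (sub_ne_zero.mpr hz)) m

lemma residue_limit_exists (f : ℂ → ℂ) (u : ℂ) (h : MeromorphicAt f u)
    (hge : ((-1 : ℤ) : WithTop ℤ) ≤ meromorphicOrderAt f u) :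
    ∃ L, Tendsto (fun z => (z - u) * f z) (𝓝[≠] u) (𝓝 L) := by
  rcases eq_or_ne (meromorphicOrderAt f u) ⊤ with htop | hne
  · refine ⟨0, ?_⟩
    have hev : ∀ᶠ z in 𝓝[≠] u, (z - u) * f z = 0 := by
      filter_upwards [meromorphicOrderAt_eq_top_iff.mp htop] with z hz
      rw [hz, mul_zero]
    rw [tendsto_congr' hev]
    exact tendsto_const_nhds
  · obtain ⟨n, hn⟩ := WithTop.ne_top_iff_exists.mp hne
    have hge' : -1 ≤ n := by rw [← hn] at hge; exact_mod_cast hge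
    obtain ⟨G, hG, hG0, hFeq⟩ := (meromorphicOrderAt_eq_int_iff (n := n) h).mp hn.symm
    set m : ℕ := (n+1).toNat with hmdef
    have hm : (m : ℤ) = n+1 := Int.toNat_of_nonneg (by omega)
    refine ⟨0^m * G u, ?_⟩
    have hev : ∀ᶠ z in 𝓝[≠] u, (z - u) * f z = (z-u)^m * G z := by
      filter_upwards [hFeq, self_mem_nhdsWithin] with z hz hz'
      have hzu : z - u ≠ 0 := sub_ne_zero.mpr hz'
      rw [hz, smul_eq_mul, ← zpow_natCast (z-u) m, hm, zpow_add_one₀ hzu]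
      ring
    rw [tendsto_congr' hev]
    have hc : Tendsto (fun z => (z-u)^m * G z) (𝓝 u) (𝓝 ((u-u)^m * G u)) :=
      (((continuous_id.sub continuous_const).pow m).continuousAt).mul hG.continuousAt.tendsto
    simpa using hc.mono_left nhdsWithin_le_nhds

/-- Let `F` be meromorphic on a region containing the closed disk of some radius
`r > 1`, whose restriction to the unit disk is a Carathéodory function with
Riesz–Herglotz measure `μ` (encoded by a finite positive measure `ν` supported on
the unit circle and a `ν`-a.e. positive semidefinite integrable matrix density `g`).
If `u` on the unit circle is a pole of `F`, then it is a simple pole (all entries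
have meromorphic order `≥ -1`), the residue of `F` at `u` is `-2u·μ({u})`, i.e.
`(z-u)F(z) → -2u·μ({u})` as `z → u`, and `lim_{r→1⁻} (ru-u)F(ru) = -2u·μ({u})`. -/
theorem simple_pole_and_residue (q : ℕ) (r : ℝ) (hr : 1 < r)
    (D : Set ℂ) (hD : IsOpen D) (hDc : IsConnected D)
    (hball : closedBall (0 : ℂ) r ⊆ D)
    (F : ℂ → Matrix (Fin q) (Fin q) ℂ)
    (hmer : ∀ z ∈ D, ∀ a b, MeromorphicAt (fun ζ => F ζ a b) z)
    (hdiff : ∀ a b, DifferentiableOn ℂ (fun z => F z a b) (ball (0 : ℂ) 1))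
    (hre : ∀ z ∈ ball (0 : ℂ) 1, ((1 / 2 : ℂ) • (F z + (F z)ᴴ)).PosSemidef)
    (ν : Measure ℂ) [IsFiniteMeasure ν] (hν : ν ((sphere (0 : ℂ) 1)ᶜ) = 0)
    (g : ℂ → Matrix (Fin q) (Fin q) ℂ)
    (hg : ∀ a b, Integrable (fun z => g z a b) ν)
    (hpsd : ∀ᵐ z ∂ν, (g z).PosSemidef)
    (hRH : ∀ z ∈ ball (0 : ℂ) 1, ∀ a b,
      F z a b - (1 / 2 : ℂ) * (F 0 a b - (starRingEnd ℂ) (F 0 b a)) =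
        ∫ ζ, ((ζ + z) / (ζ - z)) * g ζ a b ∂ν)
    (u : ℂ) (hu : u ∈ sphere (0 : ℂ) 1)
    (hpole : ∃ a b, ∀ h : MeromorphicAt (fun ζ => F ζ a b) u, meromorphicOrderAt (fun ζ => F ζ a b) u < 0) :
    (∀ a b, ∀ h : MeromorphicAt (fun ζ => F ζ a b) u,
        ((-1 : ℤ) : WithTop ℤ) ≤ meromorphicOrderAt (fun ζ => F ζ a b) u) ∧
    (∀ a b, Tendsto (fun z => (z - u) * F z a b) (nhdsWithin u {u}ᶜ)
        (nhds (-2 * u * ∫ ζ in {u}, g ζ a b ∂ν))) ∧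
    (∀ a b, Tendsto (fun t : ℝ => ((t : ℂ) * u - u) * F ((t : ℂ) * u) a b)
        (nhdsWithin (1 : ℝ) (Set.Iio 1))
        (nhds (-2 * u * ∫ ζ in {u}, g ζ a b ∂ν))) := by
  have hu1 : ‖u‖ = 1 := by simpa using hu
  have hu0 : u ≠ 0 := by intro h; simp [h] at hu1
  have hpath : Tendsto (fun t : ℝ => (t : ℂ) * u) (𝓝[<] (1:ℝ)) (𝓝[≠] u) := by
    rw [tendsto_nhdsWithin_iff]
    constructor
    · have h : Tendsto (fun t : ℝ => (t : ℂ) * u) (𝓝 1) (𝓝 ((1:ℝ) * u)) :=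
        (Complex.continuous_ofReal.mul continuous_const).tendsto 1
      simpa using h.mono_left nhdsWithin_le_nhds
    · filter_upwards [self_mem_nhdsWithin] with t ht
      simp only [Set.mem_compl_iff, Set.mem_singleton_iff]
      intro h
      have h1 : (t:ℂ) = 1 := mul_right_cancel₀ hu0 (h.trans (one_mul u).symm)
      have : t = 1 := by exact_mod_cast h1
      exact absurd this (ne_of_lt ht)
  have hA : ∀ a b, Tendsto (fun t : ℝ => ((t : ℂ) * u - u) * F ((t : ℂ) * u) a b)
      (𝓝[<] (1:ℝ)) (𝓝 (-2 * u * ∫ ζ in {u}, g ζ a b ∂ν)) := by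
    intro a b
    apply radial_aux ν hν (fun ζ => g ζ a b) (hg a b) u hu1
      ((1/2 : ℂ) * (F 0 a b - (starRingEnd ℂ) (F 0 b a))) (fun z => F z a b)
    intro z hz
    have h := hRH z hz a b
    linear_combination h
  have hUD : u ∈ D := hball (mem_closedBall_zero_iff.mpr (by rw [hu1]; linarith))
  have hord : ∀ a b, ∀ h : MeromorphicAt (fun ζ => F ζ a b) u,
      ((-1 : ℤ) : WithTop ℤ) ≤ meromorphicOrderAt (fun ζ => F ζ a b) u := by
    intro a b h
    by_contra hlt
    push_neg at hlt
    have hblow := pole_blowup _ u h hlt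
    have h1 := hblow.comp hpath
    have h2 := (hA a b).norm
    exact not_tendsto_atTop_of_tendsto_nhds h2 (by simpa [Function.comp_def] using h1)
  have hB : ∀ a b, Tendsto (fun z => (z - u) * F z a b) (𝓝[≠] u)
      (𝓝 (-2 * u * ∫ ζ in {u}, g ζ a b ∂ν)) := by
    intro a b
    have h : MeromorphicAt (fun ζ => F ζ a b) u := hmer u hUD a b
    obtain ⟨L, hL⟩ := residue_limit_exists _ u h (hord a b h)
    have hLe : L = -2 * u * ∫ ζ in {u}, g ζ a b ∂ν :=
      tendsto_nhds_unique (by simpa [Function.comp_def] using hL.comp hpath) (hA a b)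
    exact hLe ▸ hL
  exact ⟨hord, hB, hA⟩
end

section
/- Let n ≥ 1, let (C_j)_{j=0}^{n} be a Toeplitz nonnegative definite sequence of complex q×q matrices with rank T_n ≤ n, and let μ be any positive semidefinite q×q matrix Borel measure on the unit circle 𝕋 whose j-th Fourier coefficient ∫_𝕋 ζ^{−j} μ(dζ) equals C_j for all 0 ≤ j ≤ n. Then there exists a subset N of 𝕋 with at most nq elements such that μ(𝕋 \ N) = 0 (the zero matrix). -/
open Matrix MeasureTheory Metric Filter Topology
open scoped ComplexOrder

/-- The block Toeplitz matrix `T_n = [C_{j-k}]_{j,k=0}^n`, with `C_{-j} := C_jᴴ`,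
indexed so that block `(j,k)` sits at `((a,j),(b,k))`. -/
def blockToeplitz {ι : Type*} (C : ℕ → Matrix ι ι ℂ) (n : ℕ) :
    Matrix (ι × Fin (n + 1)) (ι × Fin (n + 1)) ℂ :=
  fun x y =>
    if (y.2 : ℕ) ≤ (x.2 : ℕ) then C ((x.2 : ℕ) - (y.2 : ℕ)) x.1 y.1
    else (C ((y.2 : ℕ) - (x.2 : ℕ)))ᴴ x.1 y.1

/-- A sequence `(C_j)_{j=0}^κ` is Toeplitz nonnegative definite if each block
Toeplitz matrix `T_n`, `n ≤ κ`, is positive semidefinite. -/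
def IsTNND {ι : Type*} [Fintype ι] (κ : ℕ∞) (C : ℕ → Matrix ι ι ℂ) : Prop :=
  ∀ n : ℕ, (n : ℕ∞) ≤ κ → (blockToeplitz C n).PosSemidef

/-- Evaluation of the `ℂ^q`-valued polynomial with coefficients `v (·, k)` at `ζ`. -/
noncomputable def polyEval (q n : ℕ) (ζ : ℂ) : ((Fin q × Fin (n + 1)) → ℂ) →ₗ[ℂ] (Fin q → ℂ) where
  toFun v := fun a => ∑ k : Fin (n + 1), v (a, k) * ζ ^ (k : ℕ)
  map_add' v w := by funext a; simp [add_mul, Finset.sum_add_distrib]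
  map_smul' c v := by funext a; simp [Finset.mul_sum, mul_assoc]

lemma sum_eq_quadForm {q n : ℕ} (A : Matrix (Fin q) (Fin q) ℂ) (v : (Fin q × Fin (n + 1)) → ℂ)
    (ζ : ℂ) :
    (∑ z : (Fin q × Fin (n + 1)) × (Fin q × Fin (n + 1)),
        (starRingEnd ℂ) (v z.1) * v z.2 *
          (((starRingEnd ℂ) ζ) ^ (z.1.2 : ℕ) * ζ ^ (z.2.2 : ℕ) * A z.1.1 z.2.1)) =
      star (polyEval q n ζ v) ⬝ᵥ A *ᵥ (polyEval q n ζ v) := by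
  simp only [dotProduct, Matrix.mulVec, polyEval, LinearMap.coe_mk, AddHom.coe_mk,
    Pi.star_apply, star_sum, star_mul', RCLike.star_def, map_pow, Fintype.sum_prod_type]
  refine Finset.sum_congr rfl fun a _ => ?_
  rw [Finset.sum_mul_sum]
  refine Finset.sum_congr rfl fun j _ => ?_
  simp only [Finset.mul_sum, Finset.sum_mul]
  refine Finset.sum_congr rfl fun b _ => ?_
  refine Finset.sum_congr rfl fun k _ => ?_
  ring

/-- Linear independence of the vectors `u_i ⊗ (x_i^k)_k` for distinct nodes and nonzero `u_i`. -/
lemma phi_linearIndependent {q n : ℕ} (x : Fin (n + 1) → ℂ) (hx : Function.Injective x)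
    (u : Fin (n + 1) → Fin q → ℂ) (hu : ∀ i, u i ≠ 0) :
    LinearIndependent ℂ (fun i => (fun p : Fin q × Fin (n + 1) => u i p.1 * x i ^ (p.2 : ℕ)) :
      Fin (n + 1) → (Fin q × Fin (n + 1)) → ℂ) := by
  rw [Fintype.linearIndependent_iff]
  intro c hc i
  obtain ⟨a, ha⟩ := Function.ne_iff.mp (hu i)
  have h0 : (fun j => c j * u j a) = 0 := by
    apply Matrix.eq_zero_of_forall_pow_sum_mul_pow_eq_zero hx
    intro k
    have := congrFun hc (a, k)
    simp only [Finset.sum_apply, Pi.smul_apply, smul_eq_mul, Pi.zero_apply] at this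
    calc ∑ j, c j * u j a * x j ^ (k : ℕ)
        = ∑ j, c j * (u j a * x j ^ (k : ℕ)) := by simp [mul_assoc]
      _ = 0 := this
  have := congrFun h0 i
  simp only [Pi.zero_apply] at this
  rcases mul_eq_zero.mp this with h | h
  · exact h
  · exact absurd h ha

/-- Points where the kernel evaluations of a low-rank matrix fail to span are few. -/
lemma bad_finset {q n : ℕ} (T : Matrix (Fin q × Fin (n + 1)) (Fin q × Fin (n + 1)) ℂ)
    (hrank : T.rank ≤ n) :
    ∃ F : Finset ℂ, F.card ≤ n ∧
      {z : ℂ | ∃ u : Fin q → ℂ, u ≠ 0 ∧ ∀ v, T *ᵥ v = 0 →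
        (∑ p : Fin q × Fin (n + 1), (starRingEnd ℂ) (u p.1) * z ^ (p.2 : ℕ) * v p) = 0} ⊆ ↑F := by
  classical
  set B := {z : ℂ | ∃ u : Fin q → ℂ, u ≠ 0 ∧ ∀ v, T *ᵥ v = 0 →
        (∑ p : Fin q × Fin (n + 1), (starRingEnd ℂ) (u p.1) * z ^ (p.2 : ℕ) * v p) = 0} with hB
  have key : ∀ f : Fin (n + 1) → ℂ, Function.Injective f → ¬ (∀ i, f i ∈ B) := by
    intro f hf hmem
    choose u hu hker using hmem
    set E := EuclideanSpace ℂ (Fin q × Fin (n + 1))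
    set K : Submodule ℂ E := LinearMap.ker (Matrix.toEuclideanLin T) with hK
    set φ : Fin (n + 1) → E := fun i =>
      (WithLp.equiv 2 _).symm (fun p : Fin q × Fin (n + 1) =>
        u i p.1 * ((starRingEnd ℂ) (f i)) ^ (p.2 : ℕ)) with hφ
    have hmemo : ∀ i, φ i ∈ Kᗮ := by
      intro i
      rw [Submodule.mem_orthogonal]
      intro v hv
      have hvk : T *ᵥ (WithLp.equiv 2 _ v) = 0 := by
        have h1 : Matrix.toEuclideanLin T v = 0 := hv
        have := congrArg (WithLp.equiv 2 ((Fin q × Fin (n + 1)) → ℂ)) h1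
        simpa using this
      have h2 := hker i (WithLp.equiv 2 _ v) hvk
      have : (inner ℂ v (φ i) : ℂ) =
          (starRingEnd ℂ) (∑ p : Fin q × Fin (n + 1),
            (starRingEnd ℂ) (u i p.1) * f i ^ (p.2 : ℕ) * (WithLp.equiv 2 _ v) p) := by
        rw [EuclideanSpace.inner_eq_star_dotProduct, map_sum]
        simp [dotProduct, φ, mul_comm, mul_left_comm, mul_assoc]
      rw [this, h2, map_zero]
    have hφindep : LinearIndependent ℂ φ := by
      have h1 := phi_linearIndependent (fun i => (starRingEnd ℂ) (f i))
        (fun i j hij => hf (by simpa using congrArg (starRingEnd ℂ) hij)) u hu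
      exact h1.map' (WithLp.linearEquiv 2 ℂ ((Fin q × Fin (n + 1)) → ℂ)).symm.toLinearMap
        (LinearMap.ker_eq_bot.mpr (WithLp.linearEquiv 2 ℂ _).symm.injective)
    have hsub : LinearIndependent ℂ (fun i => (⟨φ i, hmemo i⟩ : Kᗮ)) :=
      hφindep.of_comp Kᗮ.subtype
    have hcard : Fintype.card (Fin (n + 1)) ≤ Module.finrank ℂ Kᗮ :=
      hsub.fintype_card_le_finrank
    have hfr : Module.finrank ℂ K + Module.finrank ℂ Kᗮ = Module.finrank ℂ E :=
      Submodule.finrank_add_finrank_orthogonal K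
    have hrn : Module.finrank ℂ (LinearMap.range (Matrix.toEuclideanLin T))
        + Module.finrank ℂ K = Module.finrank ℂ E :=
      LinearMap.finrank_range_add_finrank_ker _
    have hrT : T.rank = Module.finrank ℂ (LinearMap.range (Matrix.toEuclideanLin T)) := by
      rw [Matrix.rank_eq_finrank_range_toLin T (PiLp.basisFun 2 ℂ _) (PiLp.basisFun 2 ℂ _)]
      rfl
    simp only [Fintype.card_fin] at hcard
    omega
  have hBfin : B.Finite := by
    by_contra h
    have hinf : B.Infinite := h
    set e := hinf.natEmbedding
    refine key (fun i => (e (i : ℕ) : ℂ)) ?_ (fun i => (e (i : ℕ)).2)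
    intro i j hij
    exact Fin.val_injective (e.injective (Subtype.ext hij))
  refine ⟨hBfin.toFinset, ?_, by simp⟩
  by_contra hcard
  push_neg at hcard
  have hle : n + 1 ≤ hBfin.toFinset.card := hcard
  refine key (fun i => ((hBfin.toFinset.equivFin.symm (Fin.castLE hle i) : ℂ))) ?_ ?_
  · intro i j hij
    exact Fin.castLE_injective hle (hBfin.toFinset.equivFin.symm.injective (Subtype.ext hij))
  · intro i
    have := (hBfin.toFinset.equivFin.symm (Fin.castLE hle i)).2
    rwa [Set.Finite.mem_toFinset] at this

/-- If a linear map kills a basis of a submodule, it kills the submodule. -/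
lemma ker_of_basis_zero {M N : Type*} [AddCommGroup M] [Module ℂ M] [AddCommGroup N]
    [Module ℂ N] (S : Submodule ℂ M) {ι : Type*} (b : Module.Basis ι ℂ S) (f : M →ₗ[ℂ] N)
    (h : ∀ i, f (b i) = 0) : ∀ v ∈ S, f v = 0 := by
  have hfS : f ∘ₗ S.subtype = 0 := b.ext fun i => by simpa using h i
  intro v hv
  have := congrArg (fun φ : ↥S →ₗ[ℂ] N => φ ⟨v, hv⟩) hfS
  simpa using this

/-- If `(C_j)_{j=0}^n` (`n ≥ 1`) is Toeplitz nonnegative definite with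
`rank T_n ≤ n` and `μ` is a positive semidefinite `q×q` matrix measure on the unit
circle (encoded by a finite positive measure `ν` supported on the circle and a
`ν`-a.e. positive semidefinite integrable matrix density `g`) whose `j`-th Fourier
coefficient equals `C_j` for `0 ≤ j ≤ n`, then `μ` is concentrated on at most `n·q`
points of the circle. -/
theorem concentrated_of_low_rank (q n : ℕ) (hn : 1 ≤ n)
    (C : ℕ → Matrix (Fin q) (Fin q) ℂ)
    (hC : IsTNND (n : ℕ∞) C)
    (hrank : (blockToeplitz C n).rank ≤ n)
    (ν : Measure ℂ) [IsFiniteMeasure ν] (hν : ν ((sphere (0 : ℂ) 1)ᶜ) = 0)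
    (g : ℂ → Matrix (Fin q) (Fin q) ℂ)
    (hg : ∀ a b, Integrable (fun z => g z a b) ν)
    (hpsd : ∀ᵐ z ∂ν, (g z).PosSemidef)
    (hFourier : ∀ j : ℕ, j ≤ n → ∀ a b,
      (∫ ζ, ζ ^ (-(j : ℤ)) * g ζ a b ∂ν) = C j a b) :
    ∃ N : Finset ℂ, ↑N ⊆ sphere (0 : ℂ) 1 ∧ N.card ≤ n * q ∧
      ∀ a b, (∫ ζ in (↑N : Set ℂ)ᶜ, g ζ a b ∂ν) = 0 := by
  classical
  rcases Nat.eq_zero_or_pos q with hq | hq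
  · subst hq
    exact ⟨∅, by simp, by simp, fun a => a.elim0⟩
  have hsphere : ∀ᵐ ζ ∂ν, ζ ∈ sphere (0 : ℂ) 1 := by
    rw [ae_iff]
    simpa [Set.compl_def] using hν
  have hherm : ∀ᵐ ζ ∂ν, (g ζ).IsHermitian := hpsd.mono fun ζ h => h.1
  -- integrability of twisted densities
  have hint : ∀ (m : ℤ) (a b : Fin q), Integrable (fun ζ => ζ ^ m * g ζ a b) ν := by
    intro m a b
    refine (hg a b).norm.mono' ?_ ?_
    · have hm : Measurable fun z : ℂ => z ^ m := by fun_prop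
      exact (hm.aestronglyMeasurable.mul (hg a b).1)
    · filter_upwards [hsphere] with ζ hζ
      have h1 : ‖ζ‖ = 1 := by simpa using hζ
      rw [norm_mul, norm_zpow, h1, _root_.one_zpow, one_mul]
  set T := blockToeplitz C n with hTdef
  -- the entries of T are the mixed Fourier coefficients
  have hEntry : ∀ (j k : Fin (n + 1)) (a b : Fin q),
      T (a, j) (b, k) = ∫ ζ, ζ ^ ((k : ℤ) - (j : ℤ)) * g ζ a b ∂ν := by
    intro j k a b
    by_cases h : (k : ℕ) ≤ (j : ℕ)
    · have hjn : (j : ℕ) - (k : ℕ) ≤ n := le_trans (Nat.sub_le _ _) (Nat.lt_succ_iff.mp j.isLt)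
      have hF := hFourier ((j : ℕ) - (k : ℕ)) hjn a b
      have hexp : (-(((j : ℕ) - (k : ℕ) : ℕ) : ℤ)) = (k : ℤ) - (j : ℤ) := by
        have := Nat.cast_sub h (R := ℤ)
        omega
      rw [hTdef, blockToeplitz]
      simp only [h, if_pos]
      rw [← hF, hexp]
    · push_neg at h
      have hkn : (k : ℕ) - (j : ℕ) ≤ n := le_trans (Nat.sub_le _ _) (Nat.lt_succ_iff.mp k.isLt)
      have hF := hFourier ((k : ℕ) - (j : ℕ)) hkn b a
      have hexp : (((k : ℕ) - (j : ℕ) : ℕ) : ℤ) = (k : ℤ) - (j : ℤ) := by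
        have := Nat.cast_sub h.le (R := ℤ)
        omega
      rw [hTdef, blockToeplitz]
      simp only [Nat.not_le.mpr h, if_neg, not_le, Matrix.conjTranspose_apply]
      rw [← hF, RCLike.star_def, ← integral_conj, ← hexp]
      refine integral_congr_ae ?_
      filter_upwards [hsphere, hherm] with ζ hζ hh
      have h1 : ‖ζ‖ = 1 := by simpa [Complex.dist_eq] using hζ
      rw [_root_.map_mul, map_zpow₀]
      congr 1
      · rw [← Complex.inv_eq_conj h1, _root_.inv_zpow, ← _root_.zpow_neg, neg_neg]
      · rw [← hh.apply a b]; rfl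
  -- for every kernel vector, the evaluated polynomial is killed by g, a.e.
  have hquad : ∀ v : (Fin q × Fin (n + 1)) → ℂ, T *ᵥ v = 0 →
      ∀ᵐ ζ ∂ν, g ζ *ᵥ (polyEval q n ζ v) = 0 := by
    intro v hv
    have hTv : star v ⬝ᵥ T *ᵥ v = 0 := by rw [hv, dotProduct_zero]
    have h1 : (∫ ζ, (∑ z : (Fin q × Fin (n + 1)) × (Fin q × Fin (n + 1)),
        (starRingEnd ℂ) (v z.1) * v z.2 *
          (ζ ^ ((z.2.2 : ℤ) - (z.1.2 : ℤ)) * g ζ z.1.1 z.2.1)) ∂ν) = 0 := by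
      rw [integral_finset_sum _ (fun z _ => ((hint _ _ _).const_mul _))]
      have heach : ∀ z : (Fin q × Fin (n + 1)) × (Fin q × Fin (n + 1)),
          (∫ ζ, (starRingEnd ℂ) (v z.1) * v z.2 *
            (ζ ^ ((z.2.2 : ℤ) - (z.1.2 : ℤ)) * g ζ z.1.1 z.2.1) ∂ν) =
          (starRingEnd ℂ) (v z.1) * v z.2 * T z.1 z.2 := by
        intro z
        rw [integral_const_mul, ← hEntry z.1.2 z.2.2 z.1.1 z.2.1]
      rw [Finset.sum_congr rfl (fun z _ => heach z), ← hTv]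
      simp only [dotProduct, Matrix.mulVec, Fintype.sum_prod_type, Finset.mul_sum]
      refine Finset.sum_congr rfl fun a _ => Finset.sum_congr rfl fun j _ =>
        Finset.sum_congr rfl fun b _ => Finset.sum_congr rfl fun k _ => by
          simp only [Pi.star_apply, RCLike.star_def]; ring
    have h2 : ∀ᵐ ζ ∂ν, (∑ z : (Fin q × Fin (n + 1)) × (Fin q × Fin (n + 1)),
        (starRingEnd ℂ) (v z.1) * v z.2 *
          (ζ ^ ((z.2.2 : ℤ) - (z.1.2 : ℤ)) * g ζ z.1.1 z.2.1)) =
        star (polyEval q n ζ v) ⬝ᵥ g ζ *ᵥ (polyEval q n ζ v) := by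
      filter_upwards [hsphere] with ζ hζ
      have h1ζ : ‖ζ‖ = 1 := by simpa [Complex.dist_eq] using hζ
      have hζ0 : ζ ≠ 0 := by
        intro h0
        rw [h0] at h1ζ
        simp at h1ζ
      rw [← sum_eq_quadForm]
      refine Finset.sum_congr rfl fun z _ => ?_
      congr 1
      congr 1
      rw [zpow_sub₀ hζ0, div_eq_mul_inv, zpow_natCast, zpow_natCast, mul_comm, ← inv_pow,
        Complex.inv_eq_conj h1ζ]
    have h3 : Integrable (fun ζ => star (polyEval q n ζ v) ⬝ᵥ g ζ *ᵥ (polyEval q n ζ v)) ν :=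
      (integrable_finset_sum _ (fun z _ => ((hint _ _ _).const_mul _))).congr h2
    have h4 : (∫ ζ, star (polyEval q n ζ v) ⬝ᵥ g ζ *ᵥ (polyEval q n ζ v) ∂ν) = 0 := by
      rw [← integral_congr_ae h2]
      exact h1
    have h5 : ∀ᵐ ζ ∂ν, 0 ≤ star (polyEval q n ζ v) ⬝ᵥ g ζ *ᵥ (polyEval q n ζ v) :=
      hpsd.mono fun ζ h => h.dotProduct_mulVec_nonneg _
    have h7 : 0 ≤ᵐ[ν] fun ζ => (star (polyEval q n ζ v) ⬝ᵥ g ζ *ᵥ (polyEval q n ζ v)).re :=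
      h5.mono fun ζ h => by simpa using (Complex.le_def.mp h).1
    have h6 : (∫ ζ, (star (polyEval q n ζ v) ⬝ᵥ g ζ *ᵥ (polyEval q n ζ v)).re ∂ν) = 0 := by
      have := integral_re h3
      simp only [RCLike.re_to_complex] at this
      rw [this, h4]
      simp
    have h8 := (integral_eq_zero_iff_of_nonneg_ae h7 (by simpa using h3.re)).mp h6
    filter_upwards [h8, h5, hpsd] with ζ hre h0le hps
    have hF0 : star (polyEval q n ζ v) ⬝ᵥ g ζ *ᵥ (polyEval q n ζ v) = 0 := by
      have him := (Complex.le_def.mp h0le).2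
      apply Complex.ext
      · simpa using hre
      · simpa using him.symm
    exact (hps.dotProduct_mulVec_zero_iff _).mp hF0
  -- the same, simultaneously for all kernel vectors
  have hker_ae : ∀ᵐ ζ ∂ν, ∀ v : (Fin q × Fin (n + 1)) → ℂ, T *ᵥ v = 0 →
      g ζ *ᵥ (polyEval q n ζ v) = 0 := by
    let K := LinearMap.ker T.mulVecLin
    let bK := Module.finBasis ℂ K
    have hae : ∀ᵐ ζ ∂ν, ∀ i,
        g ζ *ᵥ (polyEval q n ζ ((bK i : K) : (Fin q × Fin (n + 1)) → ℂ)) = 0 := by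
      rw [ae_all_iff]
      intro i
      refine hquad _ ?_
      have h2 : T.mulVecLin ((bK i : K) : (Fin q × Fin (n + 1)) → ℂ) = 0 :=
        LinearMap.mem_ker.mp (bK i).2
      rw [Matrix.mulVecLin_apply] at h2
      exact h2
    filter_upwards [hae] with ζ hζ
    intro v hv
    have hvK : v ∈ K := LinearMap.mem_ker.mpr (by simpa [Matrix.mulVecLin_apply] using hv)
    have := ker_of_basis_zero K bK ((g ζ).mulVecLin ∘ₗ polyEval q n ζ)
      (fun i => by simpa [Matrix.mulVecLin_apply] using hζ i) v hvK
    simpa [Matrix.mulVecLin_apply] using this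
  -- the finite exceptional set
  obtain ⟨F, hFcard, hFsub⟩ := bad_finset T hrank
  refine ⟨F.filter (· ∈ sphere (0 : ℂ) 1), ?_, ?_, ?_⟩
  · intro z hz
    have := Finset.mem_filter.mp (by exact_mod_cast hz)
    exact this.2
  · calc (F.filter (· ∈ sphere (0 : ℂ) 1)).card ≤ F.card := Finset.card_filter_le _ _
      _ ≤ n := hFcard
      _ = n * 1 := (mul_one n).symm
      _ ≤ n * q := Nat.mul_le_mul_left n hq
  · intro a b
    set N := F.filter (· ∈ sphere (0 : ℂ) 1) with hN
    have hae0 : ∀ᵐ ζ ∂ν, ζ ∈ ((↑N : Set ℂ))ᶜ → g ζ a b = 0 := by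
      filter_upwards [hsphere, hker_ae] with ζ hζs hζk hNc
      have hnotB : ζ ∉ {z : ℂ | ∃ u : Fin q → ℂ, u ≠ 0 ∧ ∀ v, T *ᵥ v = 0 →
          (∑ p : Fin q × Fin (n + 1), (starRingEnd ℂ) (u p.1) * z ^ (p.2 : ℕ) * v p) = 0} := by
        intro hmem
        exact hNc (by
          simp only [hN, Finset.coe_filter, Set.mem_setOf_eq]
          exact ⟨hFsub hmem, hζs⟩)
      set u : Fin q → ℂ := fun b' => (starRingEnd ℂ) (g ζ a b') with hu
      have hforall : ∀ v, T *ᵥ v = 0 →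
          (∑ p : Fin q × Fin (n + 1), (starRingEnd ℂ) (u p.1) * ζ ^ (p.2 : ℕ) * v p) = 0 := by
        intro v hv
        have h0 := congrFun (hζk v hv) a
        have hrw : (∑ p : Fin q × Fin (n + 1),
            (starRingEnd ℂ) (u p.1) * ζ ^ (p.2 : ℕ) * v p) =
            (g ζ *ᵥ (polyEval q n ζ v)) a := by
          simp only [Matrix.mulVec, dotProduct, polyEval, LinearMap.coe_mk, AddHom.coe_mk,
            Fintype.sum_prod_type, Finset.mul_sum, hu, Complex.conj_conj]
          exact Finset.sum_congr rfl fun b' _ => Finset.sum_congr rfl fun k _ => by ring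
        rw [hrw, h0]
        rfl
      have hu0 : u = 0 := by
        by_contra hne
        exact hnotB ⟨u, hne, hforall⟩
      have := congrFun hu0 b
      simpa [hu, map_eq_zero] using this
    have hNm : MeasurableSet ((↑N : Set ℂ))ᶜ := (N.finite_toSet.measurableSet).compl
    have hres : (fun ζ => g ζ a b) =ᵐ[ν.restrict ((↑N : Set ℂ))ᶜ] 0 :=
      (ae_restrict_iff' hNm).mpr hae0
    rw [integral_congr_ae hres]
    simp
end

section
/- Let n ≥ 1 and let (C_j)_{j=0}^{n} be a Toeplitz nonnegative definite sequence of complex q×q matrices with rank T_n = rank T_{n−1}. Then there exists a finite subset N of 𝕋 such that the central measure μ corresponding to (C_j)_{j=0}^{n} satisfies μ(𝕋 \ N) = 0. -/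
open Matrix MeasureTheory Metric Filter Topology
open scoped ComplexOrder

lemma aux_exists_kernel_vec {q n : ℕ}
    (A : Matrix (Fin q × Fin (n + 1)) (Fin q × Fin (n + 1)) ℂ)
    (hr : (A.submatrix (Prod.map id Fin.castSucc) (Prod.map id Fin.castSucc)).rank = A.rank)
    (b : Fin q) :
    ∃ x : (Fin q × Fin (n + 1)) → ℂ, A.mulVec x = 0 ∧
      ∀ a, x (a, Fin.last n) = if a = b then 1 else 0 := by
  classical
  set f : Fin q × Fin n → Fin q × Fin (n + 1) := Prod.map id Fin.castSucc with hf
  set B : Matrix (Fin q × Fin (n + 1)) (Fin q × Fin n) ℂ := A.submatrix id f with hB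
  set ext : ((Fin q × Fin n) → ℂ) → ((Fin q × Fin (n + 1)) → ℂ) :=
    fun v p => if h : (p.2 : ℕ) < n then v (p.1, ⟨p.2, h⟩) else 0 with hextdef
  have hext1 : ∀ v (a : Fin q) (j : Fin n), ext v (a, Fin.castSucc j) = v (a, j) := by
    intro v a j
    simp only [hextdef, Fin.coe_castSucc, j.is_lt, dif_pos]
  have hext2 : ∀ v (a : Fin q), ext v (a, Fin.last n) = 0 := by
    intro v a
    simp [hextdef]
  have hBA : ∀ v, A.mulVec (ext v) = B.mulVec v := by
    intro v
    funext p
    simp only [Matrix.mulVec, dotProduct, Fintype.sum_prod_type]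
    refine Finset.sum_congr rfl fun a _ => ?_
    rw [Fin.sum_univ_castSucc]
    rw [hext2, mul_zero, add_zero]
    refine Finset.sum_congr rfl fun j _ => ?_
    rw [hext1]
    rfl
  have hle : LinearMap.range B.mulVecLin ≤ LinearMap.range A.mulVecLin := by
    rintro y ⟨v, rfl⟩
    exact ⟨ext v, by rw [Matrix.mulVecLin_apply, Matrix.mulVecLin_apply, hBA]⟩
  have hcomp : (A.submatrix f f).mulVecLin
      = (LinearMap.funLeft ℂ ℂ f).comp B.mulVecLin := by
    apply LinearMap.ext; intro v
    funext pp
    simp [Matrix.mulVecLin_apply, LinearMap.funLeft_apply, Matrix.mulVec, dotProduct,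
      hB, Matrix.submatrix_apply]
  have h1 : (A.submatrix f f).rank ≤ B.rank := by
    rw [Matrix.rank, Matrix.rank, hcomp, LinearMap.range_comp]
    exact Submodule.finrank_map_le _ _
  have h2 : B.rank ≤ A.rank := Submodule.finrank_mono hle
  have hfr : Module.finrank ℂ (LinearMap.range A.mulVecLin)
      ≤ Module.finrank ℂ (LinearMap.range B.mulVecLin) := by
    show A.rank ≤ B.rank
    omega
  have heq : LinearMap.range B.mulVecLin = LinearMap.range A.mulVecLin :=
    Submodule.eq_of_le_of_finrank_le hle hfr
  have hmem : A.mulVec (Pi.single (b, Fin.last n) 1) ∈ LinearMap.range B.mulVecLin := by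
    rw [heq]
    exact ⟨Pi.single (b, Fin.last n) 1, rfl⟩
  obtain ⟨v, hv⟩ := hmem
  refine ⟨Pi.single (b, Fin.last n) 1 - ext v, ?_, ?_⟩
  · rw [Matrix.mulVec_sub, hBA]
    rw [Matrix.mulVecLin_apply] at hv
    rw [hv, sub_self]
  · intro a
    rw [Pi.sub_apply, hext2, sub_zero, Pi.single_apply]
    simp [Prod.ext_iff]

lemma aux_det_ne_zero {q n : ℕ} (x : Fin q → (Fin q × Fin (n + 1)) → ℂ)
    (hx : ∀ b a, x b (a, Fin.last n) = if a = b then 1 else 0) :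
    (Matrix.of fun a b : Fin q =>
      ∑ k : Fin (n + 1), Polynomial.C (x b (a, k)) * Polynomial.X ^ (k : ℕ)).det ≠ 0 := by
  classical
  set Q : Matrix (Fin q) (Fin q) (Polynomial ℂ) := Matrix.of fun a b : Fin q =>
      ∑ k : Fin (n + 1), Polynomial.C (x b (a, k)) * Polynomial.X ^ (k : ℕ) with hQ
  have hdeg : ∀ a b, (Q a b).natDegree ≤ n := by
    intro a b
    show (∑ k : Fin (n + 1), Polynomial.C (x b (a, k)) * Polynomial.X ^ (k : ℕ)).natDegree ≤ n
    exact Polynomial.natDegree_sum_le_of_forall_le Finset.univ _ fun k _ =>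
      le_trans (Polynomial.natDegree_C_mul_le _ _)
        (le_trans (Polynomial.natDegree_X_pow_le _) (Nat.le_of_lt_succ k.is_lt))
  have hcoeff : ∀ a b, (Q a b).coeff n = if a = b then 1 else 0 := by
    intro a b
    rw [hQ]
    simp only [Matrix.of_apply, Polynomial.finset_sum_coeff, Polynomial.coeff_C_mul,
      Polynomial.coeff_X_pow]
    rw [Fintype.sum_eq_single (Fin.last n)]
    · simp [hx]
    · intro k hk
      have : ¬ (n = (k : ℕ)) := by
        intro h
        exact hk (Fin.ext (by simp [← h]))
      simp [this]
  have htop : Q.det.coeff (q * n) = 1 := by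
    rw [Matrix.det_apply']
    have hcard : q * n = (Finset.univ : Finset (Fin q)).card * n := by simp
    rw [Polynomial.finset_sum_coeff]
    have hterm : ∀ σ : Equiv.Perm (Fin q),
        ((Equiv.Perm.sign σ : ℤ) : Polynomial ℂ) * ∏ i, Q (σ i) i =
          Polynomial.C ((Equiv.Perm.sign σ : ℤ) : ℂ) * ∏ i, Q (σ i) i := by
      intro σ
      rw [Polynomial.C_eq_intCast]
    rw [Finset.sum_congr rfl fun σ _ => congrArg (fun p => p.coeff (q * n)) (hterm σ)]
    have hprod : ∀ σ : Equiv.Perm (Fin q),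
        (∏ i, Q (σ i) i).coeff (q * n) = ∏ i, (Q (σ i) i).coeff n := by
      intro σ
      rw [hcard]
      exact Polynomial.coeff_prod_of_natDegree_le Finset.univ _ n fun i _ => hdeg _ _
    simp only [Polynomial.coeff_C_mul, hprod]
    rw [Finset.sum_eq_single (1 : Equiv.Perm (Fin q))]
    · simp [hcoeff]
    · intro σ _ hσ
      have : ∃ i, σ i ≠ i := by
        by_contra h
        push_neg at h
        exact hσ (Equiv.ext h)
      obtain ⟨i, hi⟩ := this
      rw [Finset.prod_eq_zero (Finset.mem_univ i) (by simp [hcoeff, hi]), mul_zero]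
    · simp
  intro h
  rw [h] at htop
  simp at htop

lemma aux_conj_pow {z : ℂ} (hz : ‖z‖ = 1) (j k : ℕ) :
    (starRingEnd ℂ z) ^ j * z ^ k = z ^ ((k : ℤ) - (j : ℤ)) := by
  have hz0 : z ≠ 0 := by intro h; rw [h] at hz; simp at hz
  rw [← RCLike.inv_eq_conj hz, zpow_sub₀ hz0, zpow_natCast, zpow_natCast, inv_pow,
    div_eq_mul_inv, mul_comm]

/-- `B` is the Moore–Penrose inverse of `A`: the four Penrose equations hold. -/
def IsMoorePenroseInv {m n : Type*} [Fintype m] [Fintype n]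
    (A : Matrix m n ℂ) (B : Matrix n m ℂ) : Prop :=
  A * B * A = A ∧ B * A * B = B ∧ (A * B)ᴴ = A * B ∧ (B * A)ᴴ = B * A

open Classical in
/-- The Moore–Penrose inverse of a complex matrix (it always exists and is unique). -/
noncomputable def mpinv {m n : Type*} [Fintype m] [Fintype n]
    (A : Matrix m n ℂ) : Matrix n m ℂ :=
  if h : ∃ B, IsMoorePenroseInv A B then h.choose else 0

/-- The block column `Y_m = col(C_1, …, C_m)`. -/
def Ymat {ι : Type*} (C : ℕ → Matrix ι ι ℂ) (m : ℕ) : Matrix (ι × Fin m) ι ℂ :=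
  fun x b => C ((x.2 : ℕ) + 1) x.1 b

/-- The block row `Z_m = (C_m, C_{m-1}, …, C_1)`. -/
def Zmat {ι : Type*} (C : ℕ → Matrix ι ι ℂ) (m : ℕ) : Matrix ι (ι × Fin m) ℂ :=
  fun a y => C (m - (y.2 : ℕ)) a y.1

/-- The centers `M_1 = 0`, `M_{m+1} = Z_m T_{m-1}⁺ Y_m` of the matrix balls. -/
noncomputable def Mseq {ι : Type*} [Fintype ι] (C : ℕ → Matrix ι ι ℂ) :
    ℕ → Matrix ι ι ℂ
  | 0 => 0
  | 1 => 0
  | (k + 2) => Zmat C (k + 1) * mpinv (blockToeplitz C k) * Ymat C (k + 1)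

/-- A sequence `(C_j)_{j=0}^κ` is central of order `k` if `C_j = M_j` for all
`k ≤ j ≤ κ`. -/
def IsCentralOfOrder {ι : Type*} [Fintype ι] (κ : ℕ∞) (k : ℕ)
    (C : ℕ → Matrix ι ι ℂ) : Prop :=
  ∀ j : ℕ, k ≤ j → (j : ℕ∞) ≤ κ → C j = Mseq C j

/-- If `(C_j)_{j=0}^n` (`n ≥ 1`) is Toeplitz nonnegative definite with
`rank T_n = rank T_{n-1}`, then the central measure corresponding to
`(C_j)_{j=0}^n` — i.e. the positive semidefinite matrix measure (encoded by a
finite positive measure `ν` supported on the unit circle and a `ν`-a.e. positive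
semidefinite integrable matrix density `g`) whose Fourier coefficients are the
central sequence extending `(C_j)_{j=0}^n` — is concentrated on a finite subset of
the circle. -/
theorem central_measure_concentrated_of_rank_stagnation (q n : ℕ) (hn : 1 ≤ n)
    (C : ℕ → Matrix (Fin q) (Fin q) ℂ)
    (hC : IsTNND (n : ℕ∞) C)
    (hrank : (blockToeplitz C n).rank = (blockToeplitz C (n - 1)).rank)
    (Cext : ℕ → Matrix (Fin q) (Fin q) ℂ)
    (hext : ∀ j ≤ n, Cext j = C j)
    (hcentral : ∀ j, n < j → Cext j = Mseq Cext j)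
    (ν : Measure ℂ) [IsFiniteMeasure ν] (hν : ν ((sphere (0 : ℂ) 1)ᶜ) = 0)
    (g : ℂ → Matrix (Fin q) (Fin q) ℂ)
    (hg : ∀ a b, Integrable (fun z => g z a b) ν)
    (hpsd : ∀ᵐ z ∂ν, (g z).PosSemidef)
    (hFourier : ∀ j : ℕ, ∀ a b,
      (∫ ζ, ζ ^ (-(j : ℤ)) * g ζ a b ∂ν) = Cext j a b) :
    ∃ N : Finset ℂ, ↑N ⊆ sphere (0 : ℂ) 1 ∧
      ∀ a b, (∫ ζ in (↑N : Set ℂ)ᶜ, g ζ a b ∂ν) = 0 := by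

  classical
  obtain ⟨m, rfl⟩ : ∃ m, n = m + 1 := ⟨n - 1, (Nat.succ_pred_eq_of_pos hn).symm⟩
  -- blockToeplitz of `Cext` agrees with that of `C` up to level `m+1`
  have hTeq : ∀ l, l ≤ m + 1 → blockToeplitz Cext l = blockToeplitz C l := by
    intro l hl
    funext pp rr
    unfold blockToeplitz
    have h1 : (pp.2 : ℕ) - (rr.2 : ℕ) ≤ m + 1 :=
      le_trans (Nat.sub_le _ _) (le_trans (Nat.le_of_lt_succ pp.2.is_lt) hl)
    have h2 : (rr.2 : ℕ) - (pp.2 : ℕ) ≤ m + 1 :=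
      le_trans (Nat.sub_le _ _) (le_trans (Nat.le_of_lt_succ rr.2.is_lt) hl)
    rw [hext _ h1, hext _ h2]
  set A := blockToeplitz Cext (m + 1) with hAdef
  have hApsd : A.PosSemidef := by
    rw [hAdef, hTeq (m + 1) le_rfl]
    exact hC (m + 1) le_rfl
  have hrank' : (A.submatrix (Prod.map id Fin.castSucc) (Prod.map id Fin.castSucc)).rank
      = A.rank := by
    have hsub : A.submatrix (Prod.map (id : Fin q → Fin q) Fin.castSucc)
        (Prod.map id Fin.castSucc) = blockToeplitz Cext m := by
      funext pp rr
      rfl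
    rw [hsub, hAdef, hTeq m (by omega), hTeq (m + 1) le_rfl]
    have := hrank
    exact this.symm
  choose x hx0 hxlast using fun b => aux_exists_kernel_vec A hrank' b
  -- basic a.e. facts
  have hsph : ∀ᵐ ζ ∂ν, ζ ∈ sphere (0 : ℂ) 1 := by
    rw [ae_iff]
    exact hν
  have hnorm1 : ∀ {ζ : ℂ}, ζ ∈ sphere (0 : ℂ) 1 → ‖ζ‖ = 1 := by
    intro ζ h
    simpa [mem_sphere_iff_norm] using h
  have hherm : ∀ᵐ ζ ∂ν, ∀ a b, (starRingEnd ℂ) (g ζ b a) = g ζ a b := by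
    filter_upwards [hpsd] with ζ h a b
    exact h.1.apply a b
  set φ : ℕ → ℕ → ℂ → ℂ := fun j k ζ => (starRingEnd ℂ ζ) ^ j * ζ ^ k with hφdef
  have hφcont : ∀ j k, Continuous (φ j k) := by
    intro j k
    have h := (Continuous.pow continuous_star j).mul (continuous_pow (M := ℂ) k)
    simp only [hφdef, starRingEnd_apply]
    exact h
  have hint : ∀ (j k : ℕ) (a b : Fin q), Integrable (fun ζ => φ j k ζ * g ζ a b) ν := by
    intro j k a b
    refine (hg a b).mono (((hφcont j k).aestronglyMeasurable).mul (hg a b).1) ?_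
    filter_upwards [hsph] with ζ hζ
    have h1 : ‖φ j k ζ‖ = 1 := by
      simp [hφdef, norm_mul, norm_pow, hnorm1 hζ, RCLike.norm_conj]
    rw [norm_mul, h1, one_mul]
  -- the entries of `A` as integrals
  have hentry : ∀ (j k : Fin (m + 2)) (a b : Fin q),
      (∫ ζ, φ (j : ℕ) (k : ℕ) ζ * g ζ a b ∂ν) = A (a, j) (b, k) := by
    intro j k a b
    show _ = blockToeplitz Cext (m + 1) (a, j) (b, k)
    unfold blockToeplitz
    by_cases hjk : (k : ℕ) ≤ (j : ℕ)
    · rw [if_pos hjk, ← hFourier ((j : ℕ) - (k : ℕ)) a b]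
      refine integral_congr_ae ?_
      filter_upwards [hsph] with ζ hζ
      have h2 := aux_conj_pow (hnorm1 hζ) (j : ℕ) (k : ℕ)
      simp only [hφdef]
      rw [h2]
      congr 1
      congr 1
      omega
    · rw [if_neg hjk, Matrix.conjTranspose_apply]
      have hjk' : (j : ℕ) < (k : ℕ) := not_le.mp hjk
      rw [← hFourier ((k : ℕ) - (j : ℕ)) b a]
      show _ = (starRingEnd ℂ) _
      rw [← integral_conj]
      refine integral_congr_ae ?_
      filter_upwards [hsph, hherm] with ζ hζ hH
      have hz0 : ζ ≠ 0 := by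
        intro h0
        have := hnorm1 hζ
        rw [h0] at this
        simp at this
      rw [_root_.map_mul, hH a b]
      congr 1
      rw [map_zpow₀, ← RCLike.inv_eq_conj (hnorm1 hζ), _root_.inv_zpow, ← _root_.zpow_neg, neg_neg]
      simp only [hφdef]
      rw [aux_conj_pow (hnorm1 hζ)]
      congr 1
      omega
  -- the quadratic forms
  set p : Fin q → ℂ → (Fin q → ℂ) :=
    fun b ζ a => ∑ k : Fin (m + 2), x b (a, k) * ζ ^ (k : ℕ) with hpdef
  set G : Fin q → ℂ → ℂ := fun b ζ =>
    ∑ pr : (Fin q × Fin (m + 2)) × (Fin q × Fin (m + 2)),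
      (starRingEnd ℂ) (x b pr.1) * x b pr.2 *
        (φ (pr.1.2 : ℕ) (pr.2.2 : ℕ) ζ * g ζ pr.1.1 pr.2.1) with hGdef
  have hGint : ∀ b, Integrable (G b) ν := by
    intro b
    exact integrable_finset_sum _ fun pr _ => ((hint _ _ _ _).const_mul _)
  have hGrep : ∀ b ζ, G b ζ = star (p b ζ) ⬝ᵥ (g ζ) *ᵥ (p b ζ) := by
    intro b ζ
    simp only [hGdef, hpdef, dotProduct, Matrix.mulVec, Pi.star_apply, star_sum,
      star_mul', star_pow, Finset.sum_mul, Finset.mul_sum, Fintype.sum_prod_type, hφdef]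
    refine Finset.sum_congr rfl fun a _ => ?_
    rw [Finset.sum_comm]
    refine Finset.sum_congr rfl fun b' _ => ?_
    rw [Finset.sum_comm]
    refine Finset.sum_congr rfl fun k _ => ?_
    refine Finset.sum_congr rfl fun j _ => ?_
    simp only [RCLike.star_def]
    ring
  have hGval : ∀ b, (∫ ζ, G b ζ ∂ν) = 0 := by
    intro b
    have h0 : star (x b) ⬝ᵥ A *ᵥ (x b) = 0 := by
      rw [hx0 b]
      simp
    simp only [hGdef]
    rw [integral_finset_sum _ fun pr _ => ((hint _ _ _ _).const_mul _)]
    rw [Finset.sum_congr rfl fun pr _ => by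
      rw [integral_const_mul, hentry pr.1.2 pr.2.2 pr.1.1 pr.2.1]]
    rw [← h0]
    simp only [dotProduct, Matrix.mulVec, Pi.star_apply, Finset.mul_sum,
      Fintype.sum_prod_type]
    refine Finset.sum_congr rfl fun a _ => ?_
    refine Finset.sum_congr rfl fun j _ => ?_
    refine Finset.sum_congr rfl fun b' _ => ?_
    refine Finset.sum_congr rfl fun k _ => ?_
    simp only [RCLike.star_def]
    ring
  have hGzero : ∀ b, ∀ᵐ ζ ∂ν, G b ζ = 0 := by
    intro b
    have hnn : ∀ᵐ ζ ∂ν, 0 ≤ G b ζ := by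
      filter_upwards [hpsd] with ζ hζ
      rw [hGrep b ζ]
      exact hζ.dotProduct_mulVec_nonneg _
    have him : ∀ᵐ ζ ∂ν, (G b ζ).im = 0 ∧ 0 ≤ (G b ζ).re := by
      filter_upwards [hnn] with ζ h
      have h' := Complex.le_def.mp h
      exact ⟨h'.2.symm.trans rfl, by simpa using h'.1⟩
    have hre_int : Integrable (fun ζ => (G b ζ).re) ν := by
      have := (hGint b).re
      simpa [RCLike.re_to_complex] using this
    have hre_zero : (∫ ζ, (G b ζ).re ∂ν) = 0 := by
      have h1 := integral_re (hGint b)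
      simp only [RCLike.re_to_complex] at h1
      rw [h1, hGval b]
      simp
    have hre0 : (fun ζ => (G b ζ).re) =ᵐ[ν] 0 :=
      (integral_eq_zero_iff_of_nonneg_ae
        (by filter_upwards [him] with ζ h; exact h.2) hre_int).mp hre_zero
    filter_upwards [hre0, him] with ζ h1 h2
    apply Complex.ext
    · simpa using h1
    · simpa using h2.1
  have hker : ∀ᵐ ζ ∂ν, ∀ b, (g ζ) *ᵥ (p b ζ) = 0 := by
    rw [ae_all_iff]
    intro b
    filter_upwards [hGzero b, hpsd] with ζ h1 h2
    rw [hGrep b ζ] at h1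
    exact (h2.dotProduct_mulVec_zero_iff _).mp h1
  -- the matrix polynomial
  set Q : Matrix (Fin q) (Fin q) (Polynomial ℂ) := Matrix.of fun a b : Fin q =>
      ∑ k : Fin (m + 2), Polynomial.C (x b (a, k)) * Polynomial.X ^ (k : ℕ) with hQdef
  have hdet : Q.det ≠ 0 := aux_det_ne_zero x hxlast
  refine ⟨Q.det.roots.toFinset.filter (fun z => z ∈ sphere (0 : ℂ) 1), ?_, ?_⟩
  · intro z hz
    simp only [Finset.coe_filter, Set.mem_setOf_eq] at hz
    exact hz.2
  · intro a b
    have hzero : ∀ᵐ ζ ∂ν, ζ ∈ (↑(Q.det.roots.toFinset.filter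
        (fun z => z ∈ sphere (0 : ℂ) 1)) : Set ℂ)ᶜ → g ζ a b = 0 := by
      filter_upwards [hsph, hker] with ζ h1 h2 hmem
      have hne : Polynomial.eval ζ Q.det ≠ 0 := by
        intro h0
        apply hmem
        simp only [Finset.coe_filter, Set.mem_setOf_eq, Multiset.mem_toFinset]
        exact ⟨Polynomial.mem_roots'.mpr ⟨hdet, h0⟩, h1⟩
      set Pm : Matrix (Fin q) (Fin q) ℂ :=
        Matrix.of fun a' c => ∑ k : Fin (m + 2), x c (a', k) * ζ ^ (k : ℕ) with hPmdef
      have hPmQ : Pm = Q.map (Polynomial.evalRingHom ζ) := by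
        funext a' c
        simp [hPmdef, hQdef, Matrix.map_apply, Polynomial.eval_finset_sum]
      have hPmdet : Pm.det ≠ 0 := by
        have h4 := (Polynomial.evalRingHom ζ).map_det Q
        simp only [RingHom.mapMatrix_apply] at h4
        rw [hPmQ, ← h4]
        simpa using hne
      have hgP : g ζ * Pm = 0 := by
        ext a' c
        have h3 := congrFun (h2 c) a'
        simpa [Matrix.mul_apply, hPmdef, Matrix.mulVec, dotProduct, hpdef,
          Finset.mul_sum, Finset.sum_mul, mul_comm, mul_left_comm, mul_assoc] using h3
      have hg0 : g ζ = 0 := by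
        have hunit : IsUnit Pm.det := isUnit_iff_ne_zero.mpr hPmdet
        calc g ζ = g ζ * (Pm * Pm⁻¹) := by rw [Matrix.mul_nonsing_inv _ hunit, mul_one]
        _ = (g ζ * Pm) * Pm⁻¹ := by rw [mul_assoc]
        _ = 0 := by rw [hgP, zero_mul]
      rw [hg0]
      rfl
    have hms : MeasurableSet ((↑(Q.det.roots.toFinset.filter
        (fun z => z ∈ sphere (0 : ℂ) 1)) : Set ℂ)ᶜ) :=
      (Set.Finite.measurableSet (Finset.finite_toSet _)).compl
    calc (∫ ζ in (↑(Q.det.roots.toFinset.filter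
          (fun z => z ∈ sphere (0 : ℂ) 1)) : Set ℂ)ᶜ, g ζ a b ∂ν)
        = ∫ ζ in (↑(Q.det.roots.toFinset.filter
          (fun z => z ∈ sphere (0 : ℂ) 1)) : Set ℂ)ᶜ, (0 : ℂ) ∂ν :=
          setIntegral_congr_ae hms hzero
      _ = 0 := by simp
end

section
/- Let κ ≥ 1, let (C_j)_{j=0}^{κ} be a sequence of complex q×q matrices that is central of order k (with 1 ≤ k ≤ κ), and let (D_j)_{j=0}^{κ} be a sequence of complex p×p matrices that is central of order ℓ (with 1 ≤ ℓ ≤ κ). Then the sequence of block diagonal matrices (diag[C_j, D_j])_{j=0}^{κ} is central of order max{k, ℓ}. -/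
open Matrix
open scoped ComplexOrder

section MP

open Matrix

/-- The Moore–Penrose inverse is unique. -/
lemma mp_unique {m n : Type*} [Fintype m] [Fintype n] {A : Matrix m n ℂ} {B B' : Matrix n m ℂ}
    (h : IsMoorePenroseInv A B) (h' : IsMoorePenroseInv A B') : B = B' := by
  obtain ⟨h1, h2, h3, h4⟩ := h
  obtain ⟨h1', h2', h3', h4'⟩ := h'
  have hAB : A * B = A * B' := by
    calc A * B = (A * B)ᴴ := h3.symm
      _ = Bᴴ * Aᴴ := by rw [conjTranspose_mul]
      _ = Bᴴ * (A * B' * A)ᴴ := by rw [h1']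
      _ = Bᴴ * (Aᴴ * (A * B')ᴴ) := by rw [conjTranspose_mul]
      _ = Bᴴ * (Aᴴ * (A * B')) := by rw [h3']
      _ = (Bᴴ * Aᴴ) * (A * B') := by rw [Matrix.mul_assoc]
      _ = (A * B)ᴴ * (A * B') := by rw [conjTranspose_mul]
      _ = (A * B) * (A * B') := by rw [h3]
      _ = (A * B * A) * B' := by rw [Matrix.mul_assoc, Matrix.mul_assoc, Matrix.mul_assoc]
      _ = A * B' := by rw [h1]
  have hBA : B * A = B' * A := by
    calc B * A = (B * A)ᴴ := h4.symm
      _ = Aᴴ * Bᴴ := by rw [conjTranspose_mul]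
      _ = (A * (B' * A))ᴴ * Bᴴ := by rw [← Matrix.mul_assoc, h1']
      _ = ((B' * A)ᴴ * Aᴴ) * Bᴴ := by rw [conjTranspose_mul]
      _ = ((B' * A) * Aᴴ) * Bᴴ := by rw [h4']
      _ = (B' * A) * (Aᴴ * Bᴴ) := by rw [Matrix.mul_assoc]
      _ = (B' * A) * (B * A)ᴴ := by rw [conjTranspose_mul]
      _ = (B' * A) * (B * A) := by rw [h4]
      _ = B' * (A * B * A) := by rw [Matrix.mul_assoc, Matrix.mul_assoc]
      _ = B' * A := by rw [h1]
  calc B = B * A * B := h2.symm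
    _ = B' * A * B := by rw [hBA]
    _ = B' * (A * B) := by rw [Matrix.mul_assoc]
    _ = B' * (A * B') := by rw [hAB]
    _ = B' * A * B' := by rw [Matrix.mul_assoc]
    _ = B' := h2'

lemma mp_diagonal {n : Type*} [Fintype n] [DecidableEq n] (d : n → ℂ) :
    IsMoorePenroseInv (diagonal d) (diagonal d⁻¹) := by
  have e1 : (fun i => d i * d⁻¹ i * d i) = d := by
    funext i; rcases eq_or_ne (d i) 0 with h | h <;> simp [h]
  have e2 : (fun i => d⁻¹ i * d i * d⁻¹ i) = d⁻¹ := by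
    funext i; rcases eq_or_ne (d i) 0 with h | h <;> simp [h]
  have e3 : (star fun i => d i * d⁻¹ i) = fun i => d i * d⁻¹ i := by
    funext i; rcases eq_or_ne (d i) 0 with h | h <;> simp [h]
  have e4 : (star fun i => d⁻¹ i * d i) = fun i => d⁻¹ i * d i := by
    funext i; rcases eq_or_ne (d i) 0 with h | h <;> simp [h]
  refine ⟨?_, ?_, ?_, ?_⟩
  · rw [diagonal_mul_diagonal, diagonal_mul_diagonal, e1]
  · rw [diagonal_mul_diagonal, diagonal_mul_diagonal, e2]
  · rw [diagonal_mul_diagonal, diagonal_conjTranspose, e3]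
  · rw [diagonal_mul_diagonal, diagonal_conjTranspose, e4]

lemma mp_conj {n : Type*} [Fintype n] [DecidableEq n] {A B U : Matrix n n ℂ}
    (hU1 : star U * U = 1) (h : IsMoorePenroseInv A B) :
    IsMoorePenroseInv (U * A * star U) (U * B * star U) := by
  have key : ∀ M N : Matrix n n ℂ,
      (U * M * star U) * (U * N * star U) = U * (M * N) * star U := by
    intro M N
    calc (U * M * star U) * (U * N * star U)
        = U * (M * (star U * U * (N * star U))) := by simp only [Matrix.mul_assoc]
      _ = U * (M * (N * star U)) := by rw [hU1, one_mul]
      _ = U * (M * N) * star U := by simp only [Matrix.mul_assoc]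
  have hct : ∀ M : Matrix n n ℂ, (U * M * star U)ᴴ = U * Mᴴ * star U := by
    intro M
    simp only [star_eq_conjTranspose, conjTranspose_mul, conjTranspose_conjTranspose, Matrix.mul_assoc]
  obtain ⟨h1, h2, h3, h4⟩ := h
  refine ⟨?_, ?_, ?_, ?_⟩
  · rw [key, key, h1]
  · rw [key, key, h2]
  · rw [key, hct, h3]
  · rw [key, hct, h4]

lemma mp_exists_of_isHermitian {n : Type*} [Fintype n] [DecidableEq n]
    {A : Matrix n n ℂ} (hA : A.IsHermitian) : ∃ B, IsMoorePenroseInv A B := by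
  obtain ⟨U, v, hU, hspec⟩ : ∃ (U : Matrix n n ℂ) (v : n → ℂ), star U * U = 1 ∧
      A = U * diagonal v * star U :=
    ⟨_, _, Matrix.mem_unitaryGroup_iff'.mp (hA.eigenvectorUnitary).2, hA.spectral_theorem⟩
  obtain ⟨B, hB⟩ : ∃ B, IsMoorePenroseInv (U * diagonal v * star U) B :=
    ⟨_, mp_conj hU (mp_diagonal v)⟩
  refine ⟨B, ?_⟩
  rw [hspec]
  exact hB

lemma mp_exists {m n : Type*} [Fintype m] [Fintype n] (A : Matrix m n ℂ) :
    ∃ B, IsMoorePenroseInv A B := by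
  classical
  have hherm : (Aᴴ * A).IsHermitian := isHermitian_conjTranspose_mul_self A
  obtain ⟨G, hG⟩ := mp_exists_of_isHermitian hherm
  obtain ⟨h1, h2, h3, h4⟩ := hG
  have hGh : Gᴴ = G := by
    have hG' : IsMoorePenroseInv (Aᴴ * A) Gᴴ := by
      refine ⟨?_, ?_, ?_, ?_⟩
      · calc Aᴴ * A * Gᴴ * (Aᴴ * A) = (Aᴴ * A * G * (Aᴴ * A))ᴴ := by
              simp only [conjTranspose_mul, conjTranspose_conjTranspose, Matrix.mul_assoc]
          _ = (Aᴴ * A)ᴴ := by rw [h1]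
          _ = Aᴴ * A := by simp only [conjTranspose_mul, conjTranspose_conjTranspose]
      · calc Gᴴ * (Aᴴ * A) * Gᴴ = (G * (Aᴴ * A) * G)ᴴ := by
              simp only [conjTranspose_mul, conjTranspose_conjTranspose, Matrix.mul_assoc]
          _ = Gᴴ := by rw [h2]
      · calc (Aᴴ * A * Gᴴ)ᴴ = G * (Aᴴ * A) := by
              simp only [conjTranspose_mul, conjTranspose_conjTranspose, Matrix.mul_assoc]
          _ = (G * (Aᴴ * A))ᴴ := h4.symm
          _ = Aᴴ * A * Gᴴ := by
              simp only [conjTranspose_mul, conjTranspose_conjTranspose, Matrix.mul_assoc]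
      · calc (Gᴴ * (Aᴴ * A))ᴴ = Aᴴ * A * G := by
              simp only [conjTranspose_mul, conjTranspose_conjTranspose, Matrix.mul_assoc]
          _ = (Aᴴ * A * G)ᴴ := h3.symm
          _ = Gᴴ * (Aᴴ * A) := by
              simp only [conjTranspose_mul, conjTranspose_conjTranspose, Matrix.mul_assoc]
    exact mp_unique hG' ⟨h1, h2, h3, h4⟩
  have hc : Aᴴ * A * G = G * (Aᴴ * A) := by
    calc Aᴴ * A * G = (Aᴴ * A * G)ᴴ := h3.symm
      _ = Gᴴ * (Aᴴ * A) := by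
          simp only [conjTranspose_mul, conjTranspose_conjTranspose, Matrix.mul_assoc]
      _ = G * (Aᴴ * A) := by rw [hGh]
  have l3 : Aᴴ * (A * (G * (Aᴴ * A))) = Aᴴ * A := by
    rw [← Matrix.mul_assoc, ← Matrix.mul_assoc, h1]
  have l2 : (A * (G * (Aᴴ * A)))ᴴ * A = Aᴴ * A := by
    calc (A * (G * (Aᴴ * A)))ᴴ * A = Aᴴ * (A * (G * (Aᴴ * A))) := by
          simp only [conjTranspose_mul, conjTranspose_conjTranspose, hGh, Matrix.mul_assoc]
      _ = Aᴴ * A := l3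
  have l1 : (A * (G * (Aᴴ * A)))ᴴ * (A * (G * (Aᴴ * A))) = Aᴴ * A := by
    calc (A * (G * (Aᴴ * A)))ᴴ * (A * (G * (Aᴴ * A)))
        = ((A * (G * (Aᴴ * A)))ᴴ * A) * (G * (Aᴴ * A)) := by rw [Matrix.mul_assoc]
      _ = (Aᴴ * A) * (G * (Aᴴ * A)) := by rw [l2]
      _ = Aᴴ * A := by rw [← Matrix.mul_assoc, h1]
  have hzero : (A * (G * (Aᴴ * A)) - A)ᴴ * (A * (G * (Aᴴ * A)) - A) = 0 := by
    rw [conjTranspose_sub, Matrix.sub_mul, Matrix.mul_sub, Matrix.mul_sub, l1, l2, l3]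
    simp
  have hAGH : A * (G * (Aᴴ * A)) = A :=
    sub_eq_zero.mp (Matrix.conjTranspose_mul_self_eq_zero.mp hzero)
  refine ⟨G * Aᴴ, ?_, ?_, ?_, ?_⟩
  · calc A * (G * Aᴴ) * A = A * (G * (Aᴴ * A)) := by simp only [Matrix.mul_assoc]
      _ = A := hAGH
  · calc G * Aᴴ * A * (G * Aᴴ) = (G * (Aᴴ * A) * G) * Aᴴ := by simp only [Matrix.mul_assoc]
      _ = G * Aᴴ := by rw [h2]
  · simp only [conjTranspose_mul, conjTranspose_conjTranspose, hGh, Matrix.mul_assoc]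
  · calc (G * Aᴴ * A)ᴴ = Aᴴ * A * G := by
              simp only [conjTranspose_mul, conjTranspose_conjTranspose, hGh, Matrix.mul_assoc]
      _ = G * (Aᴴ * A) := hc
      _ = G * Aᴴ * A := by rw [Matrix.mul_assoc]

lemma mpinv_isMP {m n : Type*} [Fintype m] [Fintype n] (A : Matrix m n ℂ) :
    IsMoorePenroseInv A (mpinv A) := by
  have h := mp_exists A
  rw [mpinv, dif_pos h]
  exact h.choose_spec

lemma mpinv_eq {m n : Type*} [Fintype m] [Fintype n] {A : Matrix m n ℂ} {B : Matrix n m ℂ}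
    (h : IsMoorePenroseInv A B) : mpinv A = B :=
  mp_unique (mpinv_isMP A) h

lemma mp_fromBlocks {m n m' n' : Type*} [Fintype m] [Fintype n] [Fintype m'] [Fintype n']
    {A : Matrix m n ℂ} {B : Matrix n m ℂ} {A' : Matrix m' n' ℂ} {B' : Matrix n' m' ℂ}
    (h : IsMoorePenroseInv A B) (h' : IsMoorePenroseInv A' B') :
    IsMoorePenroseInv (fromBlocks A 0 0 A') (fromBlocks B 0 0 B') := by
  obtain ⟨h1, h2, h3, h4⟩ := h
  obtain ⟨h1', h2', h3', h4'⟩ := h'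
  refine ⟨?_, ?_, ?_, ?_⟩ <;>
    simp [fromBlocks_multiply, fromBlocks_conjTranspose, h1, h2, h3, h4, h1', h2', h3', h4']

lemma mp_submatrix {m n m' n' : Type*} [Fintype m] [Fintype n] [Fintype m'] [Fintype n']
    {A : Matrix m n ℂ} {B : Matrix n m ℂ} (e : m' ≃ m) (f : n' ≃ n)
    (h : IsMoorePenroseInv A B) :
    IsMoorePenroseInv (A.submatrix e f) (B.submatrix f e) := by
  obtain ⟨h1, h2, h3, h4⟩ := h
  refine ⟨?_, ?_, ?_, ?_⟩
  · rw [submatrix_mul_equiv, submatrix_mul_equiv, h1]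
  · rw [submatrix_mul_equiv, submatrix_mul_equiv, h2]
  · rw [submatrix_mul_equiv, conjTranspose_submatrix, h3]
  · rw [submatrix_mul_equiv, conjTranspose_submatrix, h4]

lemma mpinv_submatrix {m n m' n' : Type*} [Fintype m] [Fintype n] [Fintype m'] [Fintype n']
    (A : Matrix m n ℂ) (e : m' ≃ m) (f : n' ≃ n) :
    mpinv (A.submatrix e f) = (mpinv A).submatrix f e :=
  mpinv_eq (mp_submatrix e f (mpinv_isMP A))

lemma mpinv_fromBlocks {m n m' n' : Type*} [Fintype m] [Fintype n] [Fintype m'] [Fintype n']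
    (A : Matrix m n ℂ) (A' : Matrix m' n' ℂ) :
    mpinv (fromBlocks A 0 0 A') = fromBlocks (mpinv A) 0 0 (mpinv A') :=
  mpinv_eq (mp_fromBlocks (mpinv_isMP A) (mpinv_isMP A'))

/-- Distributivity equivalence `(α ⊕ β) × γ ≃ α × γ ⊕ β × γ` with good defeq. -/
def sumProdE (α β γ : Type*) : (α ⊕ β) × γ ≃ (α × γ) ⊕ (β × γ) where
  toFun x := match x with
    | (Sum.inl a, c) => Sum.inl (a, c)
    | (Sum.inr b, c) => Sum.inr (b, c)
  invFun y := match y with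
    | Sum.inl (a, c) => (Sum.inl a, c)
    | Sum.inr (b, c) => (Sum.inr b, c)
  left_inv := by rintro ⟨a | b, c⟩ <;> rfl
  right_inv := by rintro (⟨a, c⟩ | ⟨b, c⟩) <;> rfl

section Structural

variable {q p : ℕ} (C : ℕ → Matrix (Fin q) (Fin q) ℂ) (D : ℕ → Matrix (Fin p) (Fin p) ℂ)

lemma blockToeplitz_sum (n : ℕ) :
    blockToeplitz (fun j => fromBlocks (C j) 0 0 (D j)) n =
      (fromBlocks (blockToeplitz C n) 0 0 (blockToeplitz D n)).submatrix
        (sumProdE (Fin q) (Fin p) (Fin (n + 1))) (sumProdE (Fin q) (Fin p) (Fin (n + 1))) := by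
  ext ⟨x, j⟩ ⟨y, k⟩
  cases x <;> cases y <;>
    simp only [blockToeplitz, submatrix_apply, sumProdE, Equiv.coe_fn_mk,
      fromBlocks_apply₁₁, fromBlocks_apply₁₂, fromBlocks_apply₂₁, fromBlocks_apply₂₂,
      conjTranspose_apply, Matrix.zero_apply, star_zero] <;>
    split <;>
    simp [conjTranspose_apply]

lemma Ymat_sum (m : ℕ) :
    Ymat (fun j => fromBlocks (C j) 0 0 (D j)) m =
      (fromBlocks (Ymat C m) 0 0 (Ymat D m)).submatrix
        (sumProdE (Fin q) (Fin p) (Fin m)) id := by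
  ext ⟨x, j⟩ y
  cases x <;> cases y <;>
    simp [Ymat, sumProdE]

lemma Zmat_sum (m : ℕ) :
    Zmat (fun j => fromBlocks (C j) 0 0 (D j)) m =
      (fromBlocks (Zmat C m) 0 0 (Zmat D m)).submatrix id
        (sumProdE (Fin q) (Fin p) (Fin m)) := by
  ext x ⟨y, j⟩
  cases x <;> cases y <;>
    simp [Zmat, sumProdE]

lemma Mseq_sum (j : ℕ) (hj : 1 ≤ j) :
    Mseq (fun i => fromBlocks (C i) 0 0 (D i)) j = fromBlocks (Mseq C j) 0 0 (Mseq D j) := by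
  rcases j with _ | _ | k
  · omega
  · simp [Mseq, fromBlocks_zero]
  · show Mseq (fun i => fromBlocks (C i) 0 0 (D i)) (k + 2) = _
    rw [show Mseq (fun i => fromBlocks (C i) 0 0 (D i)) (k + 2) =
        Zmat (fun i => fromBlocks (C i) 0 0 (D i)) (k + 1) *
          mpinv (blockToeplitz (fun i => fromBlocks (C i) 0 0 (D i)) k) *
          Ymat (fun i => fromBlocks (C i) 0 0 (D i)) (k + 1) from rfl,
      show Mseq C (k + 2) = Zmat C (k + 1) * mpinv (blockToeplitz C k) * Ymat C (k + 1) from rfl,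
      show Mseq D (k + 2) = Zmat D (k + 1) * mpinv (blockToeplitz D k) * Ymat D (k + 1) from rfl,
      blockToeplitz_sum, Ymat_sum, Zmat_sum, mpinv_submatrix, mpinv_fromBlocks,
      submatrix_mul_equiv, submatrix_mul_equiv, submatrix_id_id]
    simp [fromBlocks_multiply]

end Structural

end MP

/-- The block diagonal sum of a sequence central of order `k` and a sequence central
of order `ℓ` is central of order `max k ℓ`. -/
theorem isCentralOfOrder_fromBlocks (p q : ℕ) (κ : ℕ∞) (k l : ℕ)
    (hk1 : 1 ≤ k) (hkκ : (k : ℕ∞) ≤ κ) (hl1 : 1 ≤ l) (hlκ : (l : ℕ∞) ≤ κ)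
    (C : ℕ → Matrix (Fin q) (Fin q) ℂ) (D : ℕ → Matrix (Fin p) (Fin p) ℂ)
    (hC : IsCentralOfOrder κ k C) (hD : IsCentralOfOrder κ l D) :
    IsCentralOfOrder κ (max k l) (fun j => Matrix.fromBlocks (C j) 0 0 (D j)) := by
  intro j hj hjκ
  have hk : k ≤ j := le_trans (le_max_left k l) hj
  have hl : l ≤ j := le_trans (le_max_right k l) hj
  have h1 : 1 ≤ j := le_trans hk1 hk
  show Matrix.fromBlocks (C j) 0 0 (D j) = Mseq (fun i => Matrix.fromBlocks (C i) 0 0 (D i)) j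
  rw [Mseq_sum C D j h1, hC j hk hjκ, hD j hl hjκ]
end
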